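/- arXiv:2603.14708 — 5 statements merged into one kernel-verified Lean document; each statement's English description precedes it below -/
import Mathlib

section
/- Let z ∈ ℂ with z ≠ 0. Then there exist N₀ ∈ ℕ and C > 0 such that for all integers n ≥ N₀ one has |(i·z^{n+1}/(2n−1)!!)·h_n^{(1)}(z) − 1| ≤ C/n; that is, h_n^{(1)}(z) = ((2n−1)!!/(i·z^{n+1}))·(1 + O(1/n)) as n → ∞. -/
open Complex

/-- Spherical Hankel function of the first kind (Rayleigh closed form). -/
noncomputable def sphHankel (n : ℕ) (z : ℂ) : ℂ :=
  (-Complex.I) ^ (n + 1) * (Complex.exp (Complex.I * z) / z) *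
    ∑ k ∈ Finset.range (n + 1),
      (Complex.I ^ k / ((Nat.factorial k : ℂ) * (2 * z) ^ k)) *
        ((Nat.factorial (n + k) : ℂ) / (Nat.factorial (n - k) : ℂ))

/-- Double factorial `(2n-1)!! = (2n)!/(2^n n!)`, as a complex number. -/
noncomputable def doubleFac (n : ℕ) : ℂ :=
  (Nat.factorial (2 * n) : ℂ) / ((2 : ℂ) ^ n * (Nat.factorial n : ℂ))


noncomputable def Acoef (n j : ℕ) : ℝ :=
  2 ^ j * (Nat.factorial n) * (Nat.factorial (2*n - j)) /
    ((Nat.factorial (n - j)) * (Nat.factorial (2*n)))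

lemma Acoef_nonneg (n j : ℕ) : 0 ≤ Acoef n j := by
  unfold Acoef; positivity

lemma Acoef_zero (n : ℕ) : Acoef n 0 = 1 := by
  unfold Acoef
  rw [pow_zero, one_mul, Nat.sub_zero, Nat.sub_zero]
  exact div_self (by positivity)

lemma Acoef_succ (n j : ℕ) (h : j < n) :
    Acoef n (j+1) = Acoef n j * (2*(n-j) : ℕ) / ((n + (n-j) : ℕ)) := by
  have e1 : n - j = (n - (j+1)) + 1 := by omega
  have e2 : 2*n - j = n + (n - (j+1)) + 1 := by omega
  have e3 : n + (n - j) = n + (n - (j+1)) + 1 := by omega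
  have e4 : 2*(n-j) = 2*((n-(j+1))+1) := by omega
  have e5 : 2*n - (j+1) = n + (n - (j+1)) := by omega
  unfold Acoef
  rw [e2, e3, e4, e1, e5]
  generalize (n - (j+1)) = a
  rw [Nat.factorial_succ, Nat.factorial_succ]
  have f1 : (Nat.factorial (n+a) : ℝ) ≠ 0 := by positivity
  have f2 : (Nat.factorial a : ℝ) ≠ 0 := by positivity
  have f3 : (Nat.factorial (2*n) : ℝ) ≠ 0 := by positivity
  have f4 : ((a:ℝ) + 1) ≠ 0 := by positivity
  have f5 : ((n:ℝ) + (a:ℝ) + 1) ≠ 0 := by positivity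
  push_cast
  field_simp
  ring

lemma Acoef_bounds (n : ℕ) (hn : 1 ≤ n) : ∀ j, j ≤ n →
    Acoef n j ≤ 1 ∧ 1 - Acoef n j ≤ (j:ℝ)^2 / n := by
  intro j
  induction j with
  | zero =>
    intro _; rw [Acoef_zero]
    constructor
    · exact le_rfl
    · simp
  | succ j ih =>
    intro hj
    have hjn : j < n := by omega
    obtain ⟨h1, h2⟩ := ih (by omega)
    have hA0 := Acoef_nonneg n j
    rw [Acoef_succ n j hjn]
    have hb : ((2*(n-j) : ℕ) : ℝ) ≤ ((n + (n-j) : ℕ) : ℝ) := by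
      have : 2*(n-j) ≤ n + (n-j) := by omega
      exact_mod_cast this
    have hbpos : (0:ℝ) < ((n + (n-j) : ℕ) : ℝ) := by
      have : 0 < n + (n - j) := by omega
      exact_mod_cast this
    have hfrac1 : Acoef n j * ((2*(n-j) : ℕ) : ℝ) / ((n + (n-j) : ℕ) : ℝ) ≤ Acoef n j := by
      rw [div_le_iff₀ hbpos]
      exact mul_le_mul_of_nonneg_left hb hA0
    constructor
    · exact hfrac1.trans h1
    · have hgap : ((n + (n-j) : ℕ) : ℝ) - ((2*(n-j) : ℕ) : ℝ) = (j:ℝ) := by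
        push_cast [Nat.cast_sub hjn.le]; ring
      have hnn : (0:ℝ) < n := by exact_mod_cast hn
      have hbn : (n:ℝ) ≤ ((n + (n-j) : ℕ) : ℝ) := by
        have : n ≤ n + (n-j) := by omega
        exact_mod_cast this
      have step1 : 1 - Acoef n j * ((2*(n-j) : ℕ) : ℝ) / ((n + (n-j) : ℕ) : ℝ)
          = (1 - Acoef n j) + Acoef n j * ((j:ℝ) / ((n + (n-j) : ℕ) : ℝ)) := by
        have h2a : ((2*(n-j):ℕ):ℝ) = ((n+(n-j):ℕ):ℝ) - (j:ℝ) := by linarith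
        rw [h2a]
        field_simp
        ring
      have hstep2 : Acoef n j * ((j:ℝ) / ((n + (n-j) : ℕ) : ℝ)) ≤ (j:ℝ)/n := by
        calc Acoef n j * ((j:ℝ) / ((n + (n-j) : ℕ) : ℝ))
            ≤ 1 * ((j:ℝ) / ((n + (n-j) : ℕ) : ℝ)) := by
              apply mul_le_mul_of_nonneg_right h1; positivity
          _ = (j:ℝ) / ((n + (n-j) : ℕ) : ℝ) := one_mul _
          _ ≤ (j:ℝ)/n := div_le_div_of_nonneg_left (by positivity) hnn hbn
      have final : 1 - Acoef n j * ((2*(n-j) : ℕ) : ℝ) / ((n + (n-j) : ℕ) : ℝ)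
          ≤ (j:ℝ)^2/n + (j:ℝ)/n := by rw [step1]; linarith
      have hnum : ((j:ℝ)^2 + j)/n ≤ ((j:ℝ)+1)^2/n := by
        gcongr
        nlinarith [Nat.cast_nonneg (α := ℝ) j]
      rw [← add_div] at final
      push_cast at final hnum ⊢
      linarith


lemma key_identity (n : ℕ) (z : ℂ) (hz : z ≠ 0) :
    Complex.I * z ^ (n + 1) / doubleFac n * sphHankel n z
      = Complex.exp (Complex.I * z) *
          ∑ j ∈ Finset.range (n + 1),
            (-(Complex.I) * z) ^ j / (Nat.factorial j : ℂ) * (Acoef n j : ℝ) := by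
  unfold sphHankel
  rw [Finset.mul_sum, mul_comm (Complex.exp (Complex.I * z)), Finset.sum_mul]
  have hrefl := Finset.sum_range_reflect
    (fun j => (-(Complex.I) * z) ^ j / (Nat.factorial j : ℂ) * ((Acoef n j : ℝ) : ℂ)
        * Complex.exp (Complex.I * z)) (n+1)
  rw [← hrefl, Finset.mul_sum]
  apply Finset.sum_congr rfl
  intro j hj
  rw [Finset.mem_range] at hj
  have hjn : j ≤ n := by omega
  obtain ⟨m, hm⟩ : ∃ m, n = j + m := ⟨n - j, by omega⟩
  have hnj : n + 1 - 1 - j = m := by omega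
  rw [hnj]
  subst hm
  have hsub2 : j + m + j = 2*j + m := by omega
  have hsub3 : 2*(j+m) - m = 2*j + m := by omega
  have hsub4 : j + m - m = j := by omega
  have hsub5 : j + m - j = m := by omega
  have hA : ((Acoef (j+m) m : ℝ) : ℂ)
      = 2^m * (Nat.factorial (j+m) : ℂ) * (Nat.factorial (2*j+m) : ℂ) /
        ((Nat.factorial j : ℂ) * (Nat.factorial (2*(j+m)) : ℂ)) := by
    unfold Acoef
    rw [hsub3, hsub4]
    push_cast
    ring
  have hpar : ((-1:ℂ))^(j+m+1) * (-1:ℂ)^(j+1) = (-1:ℂ)^m := by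
    rw [← pow_add]
    have e : j+m+1+(j+1) = 2*(j+1) + m := by omega
    rw [e, pow_add, pow_mul]
    norm_num
  have hI : Complex.I * (-Complex.I) ^ (j + m + 1) * Complex.I ^ j
      = (-1)^m * Complex.I ^ m := by
    rw [neg_pow]
    have e1 : Complex.I * ((-1:ℂ)^(j+m+1) * Complex.I ^ (j+m+1)) * Complex.I ^ j
        = (-1:ℂ)^(j+m+1) * ((Complex.I^2)^(j+1) * Complex.I ^ m) := by ring
    rw [e1, Complex.I_sq, ← mul_assoc, hpar]
  rw [hsub2, hsub5, hA]
  unfold doubleFac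
  have f1 : (Nat.factorial (j+m) : ℂ) ≠ 0 := by exact_mod_cast (Nat.factorial_pos _).ne'
  have f2 : (Nat.factorial m : ℂ) ≠ 0 := by exact_mod_cast (Nat.factorial_pos _).ne'
  have f3 : (Nat.factorial j : ℂ) ≠ 0 := by exact_mod_cast (Nat.factorial_pos _).ne'
  have f4 : (Nat.factorial (2*(j+m)) : ℂ) ≠ 0 := by exact_mod_cast (Nat.factorial_pos _).ne'
  have f5 : (Nat.factorial (2*j+m) : ℂ) ≠ 0 := by exact_mod_cast (Nat.factorial_pos _).ne'
  have f6 : (2:ℂ) ≠ 0 := two_ne_zero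
  calc Complex.I * z ^ (j+m+1) / ((Nat.factorial (2*(j+m)) : ℂ) / ((2:ℂ)^(j+m) * (Nat.factorial (j+m) : ℂ))) *
        ((-Complex.I) ^ (j+m+1) * (Complex.exp (Complex.I * z) / z) *
          (Complex.I ^ j / ((Nat.factorial j : ℂ) * (2*z)^j) * ((Nat.factorial (2*j+m) : ℂ) / (Nat.factorial m : ℂ))))
      = (Complex.I * (-Complex.I) ^ (j+m+1) * Complex.I ^ j) *
        (z ^ (j+m+1) / ((Nat.factorial (2*(j+m)) : ℂ) / ((2:ℂ)^(j+m) * (Nat.factorial (j+m) : ℂ))) *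
          (Complex.exp (Complex.I * z) / z) *
          (1 / ((Nat.factorial j : ℂ) * (2*z)^j)) * ((Nat.factorial (2*j+m) : ℂ) / (Nat.factorial m : ℂ))) := by
        ring
    _ = ((-1:ℂ)^m * Complex.I ^ m) *
        (z ^ (j+m+1) / ((Nat.factorial (2*(j+m)) : ℂ) / ((2:ℂ)^(j+m) * (Nat.factorial (j+m) : ℂ))) *
          (Complex.exp (Complex.I * z) / z) *
          (1 / ((Nat.factorial j : ℂ) * (2*z)^j)) * ((Nat.factorial (2*j+m) : ℂ) / (Nat.factorial m : ℂ))) := by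
        rw [hI]
    _ = (-Complex.I * z) ^ m / (Nat.factorial m : ℂ) *
        (2^m * (Nat.factorial (j+m) : ℂ) * (Nat.factorial (2*j+m) : ℂ) /
          ((Nat.factorial j : ℂ) * (Nat.factorial (2*(j+m)) : ℂ))) * Complex.exp (Complex.I * z) := by
        have e9 : (-Complex.I*z)^m = (-1:ℂ)^m * Complex.I^m * z^m := by
          rw [mul_pow, neg_pow]
        have e7 : z ^ (j+m+1) = z^j * z^m * z := by rw [pow_succ, pow_add]
        have e8 : (2*z)^j = 2^j * z^j := by rw [mul_pow]
        rw [e9, e7, e8]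
        have h2j : ((2:ℂ))^(j+m) = 2^j * 2^m := by rw [pow_add]
        rw [h2j]
        have hzj : z^j ≠ 0 := pow_ne_zero _ hz
        have h2jn : ((2:ℂ))^j ≠ 0 := pow_ne_zero _ two_ne_zero
        field_simp
lemma term_le_exp {x : ℝ} (hx : 0 ≤ x) (n : ℕ) :
    x^n / (Nat.factorial n) ≤ Real.exp x := by
  refine le_trans ?_ (Real.sum_le_exp_of_nonneg hx (n+1))
  exact Finset.single_le_sum (f := fun i => x^i / (Nat.factorial i : ℝ))
    (fun i _ => by positivity) (Finset.self_mem_range_succ n)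

lemma exp_tail_bound (w : ℂ) (n : ℕ) :
    ‖Complex.exp w - ∑ j ∈ Finset.range n, w^j / (Nat.factorial j : ℂ)‖
      ≤ ‖w‖^n / (Nat.factorial n) * Real.exp ‖w‖ := by
  have hs : HasSum (fun j => w^j / (Nat.factorial j : ℂ)) (Complex.exp w) := by
    rw [Complex.exp_eq_exp_ℂ]
    exact NormedSpace.expSeries_div_hasSum_exp w
  have hsum := hs.summable
  have heq : Complex.exp w - ∑ j ∈ Finset.range n, w^j / (Nat.factorial j : ℂ)
      = ∑' i, w^(i+n) / (Nat.factorial (i+n) : ℂ) := by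
    rw [← hs.tsum_eq, ← Summable.sum_add_tsum_nat_add n hsum]
    ring
  rw [heq]
  have hnorm : ∀ i, ‖w^(i+n)/(Nat.factorial (i+n):ℂ)‖
      = ‖w‖^(i+n)/((Nat.factorial (i+n)) : ℝ) := by
    intro i
    rw [norm_div, norm_pow]
    norm_num
  have hsumR : Summable (fun i => ‖w‖^(i+n)/((Nat.factorial (i+n)) : ℝ)) := by
    have h0 := (NormedSpace.expSeries_div_hasSum_exp ‖w‖).summable
    exact (summable_nat_add_iff n).2 h0
  have hsumR2 : Summable (fun i => ‖w‖^n/((Nat.factorial n) : ℝ) * (‖w‖^i/(Nat.factorial i : ℝ))) :=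
    (NormedSpace.expSeries_div_hasSum_exp ‖w‖).summable.mul_left _
  have hterm : ∀ i, ‖w‖^(i+n)/((Nat.factorial (i+n)) : ℝ)
      ≤ ‖w‖^n/((Nat.factorial n) : ℝ) * (‖w‖^i/(Nat.factorial i : ℝ)) := by
    intro i
    rw [pow_add, div_mul_div_comm, mul_comm (‖w‖^n)]
    have hle : ((Nat.factorial n : ℝ)) * (Nat.factorial i : ℝ) ≤ ((Nat.factorial (i+n)) : ℝ) := by
      have h0 : Nat.factorial n * Nat.factorial i ≤ Nat.factorial (n+i) :=
        Nat.le_of_dvd (Nat.factorial_pos _) (Nat.factorial_mul_factorial_dvd_factorial_add n i)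
      rw [Nat.add_comm] at h0
      exact_mod_cast h0
    gcongr
    all_goals first | positivity | exact hle
  calc ‖∑' i, w^(i+n)/(Nat.factorial (i+n):ℂ)‖
      ≤ ∑' i, ‖w^(i+n)/(Nat.factorial (i+n):ℂ)‖ := by
        apply norm_tsum_le_tsum_norm
        simpa only [hnorm] using hsumR
    _ = ∑' i, ‖w‖^(i+n)/((Nat.factorial (i+n)) : ℝ) := by
        exact tsum_congr hnorm
    _ ≤ ∑' i, ‖w‖^n/((Nat.factorial n) : ℝ) * (‖w‖^i/(Nat.factorial i : ℝ)) :=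
        Summable.tsum_le_tsum hterm hsumR hsumR2
    _ = ‖w‖^n/((Nat.factorial n) : ℝ) * Real.exp ‖w‖ := by
        rw [tsum_mul_left]
        congr 1
        rw [Real.exp_eq_exp_ℝ]
        exact (NormedSpace.expSeries_div_hasSum_exp ‖w‖).tsum_eq

lemma sq_le_four_pow (j : ℕ) : ((j:ℝ))^2 ≤ 4^j := by
  have h : (j:ℝ) ≤ 2^j := by exact_mod_cast (Nat.lt_two_pow_self (n := j)).le
  have h0 : (0:ℝ) ≤ j := Nat.cast_nonneg j
  calc ((j:ℝ))^2 = (j:ℝ) * (j:ℝ) := sq (j:ℝ)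
    _ ≤ (2:ℝ)^j * 2^j := by exact mul_le_mul h h h0 (by positivity)
    _ = 4^j := by rw [← mul_pow]; norm_num

lemma nat_le_two_pow_succ (n : ℕ) : (n:ℝ) ≤ 2^(n+1) := by
  have : n < 2^(n+1) := lt_of_lt_of_le (Nat.lt_two_pow_self (n := n)) (Nat.pow_le_pow_right (by norm_num) (by omega))
  exact_mod_cast this.le

theorem sphHankel_asymptotic (z : ℂ) (hz : z ≠ 0) :
    ∃ (N₀ : ℕ) (C : ℝ), 0 < C ∧ ∀ n : ℕ, N₀ ≤ n →
      ‖Complex.I * z ^ (n + 1) / doubleFac n * sphHankel n z - 1‖ ≤ C / n := by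
  set y : ℝ := ‖z‖ with hy
  have hy0 : 0 ≤ y := norm_nonneg z
  refine ⟨1, Real.exp y * (Real.exp (4*y) + Real.exp (2*y) * Real.exp y), by positivity, ?_⟩
  intro n hn
  have hnR : (1:ℝ) ≤ n := by exact_mod_cast hn
  have hnpos : (0:ℝ) < n := by linarith
  set w : ℂ := -Complex.I * z with hw
  have hwn : ‖w‖ = y := by
    rw [hw, norm_mul, norm_neg, Complex.norm_I, one_mul]
  -- rewrite using the key identity
  rw [key_identity n z hz]
  have hexp1 : (1:ℂ) = Complex.exp (Complex.I * z) * Complex.exp w := by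
    rw [hw, ← Complex.exp_add]
    norm_num
  rw [hexp1, ← mul_sub]
  rw [norm_mul]
  -- bound on ‖exp(I z)‖
  have hexpIz : ‖Complex.exp (Complex.I * z)‖ ≤ Real.exp y := by
    rw [Complex.norm_exp]
    apply Real.exp_le_exp.mpr
    have h1 : (Complex.I * z).re = -z.im := by simp
    rw [h1]
    calc -z.im ≤ |z.im| := neg_le_abs z.im
      _ ≤ ‖z‖ := Complex.abs_im_le_norm z
  -- decompose the inner difference
  set S1 : ℂ := ∑ j ∈ Finset.range (n+1),
      w ^ j / (Nat.factorial j : ℂ) * (((Acoef n j : ℝ) : ℂ) - 1) with hS1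
  set S2 : ℂ := Complex.exp w - ∑ j ∈ Finset.range (n+1), w ^ j / (Nat.factorial j : ℂ) with hS2
  have hdecomp : (∑ j ∈ Finset.range (n + 1),
        (-Complex.I * z) ^ j / (Nat.factorial j : ℂ) * ((Acoef n j : ℝ) : ℂ)) - Complex.exp w
      = S1 - S2 := by
    rw [hS1, hS2, ← hw]
    simp only [mul_sub, mul_one, Finset.sum_sub_distrib]
    ring
  rw [hdecomp]
  -- bound S1
  have hbound1 : ‖S1‖ ≤ Real.exp (4*y) / n := by
    rw [hS1]
    calc ‖∑ j ∈ Finset.range (n+1), w ^ j / (Nat.factorial j : ℂ) * (((Acoef n j : ℝ) : ℂ) - 1)‖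
        ≤ ∑ j ∈ Finset.range (n+1), ‖w ^ j / (Nat.factorial j : ℂ) * (((Acoef n j : ℝ) : ℂ) - 1)‖ :=
          norm_sum_le _ _
      _ ≤ ∑ j ∈ Finset.range (n+1), (4*y)^j / (Nat.factorial j : ℝ) / n := by
          apply Finset.sum_le_sum
          intro j hj
          rw [Finset.mem_range] at hj
          have hjn : j ≤ n := by omega
          obtain ⟨hA1, hA2⟩ := Acoef_bounds n (by omega) j hjn
          have hA0 := Acoef_nonneg n j
          rw [norm_mul, norm_div, norm_pow, hwn]
          have hAc : ‖(((Acoef n j : ℝ) : ℂ) - 1)‖ = 1 - Acoef n j := by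
            rw [show (((Acoef n j : ℝ) : ℂ) - 1) = (((Acoef n j - 1 : ℝ)) : ℂ) by push_cast; ring]
            rw [Complex.norm_real, Real.norm_eq_abs, abs_of_nonpos (by linarith)]
            ring
          rw [hAc]
          have hfac : ‖((Nat.factorial j : ℂ))‖ = (Nat.factorial j : ℝ) := by norm_num
          rw [hfac]
          calc y^j / (Nat.factorial j : ℝ) * (1 - Acoef n j)
              ≤ y^j / (Nat.factorial j : ℝ) * ((j:ℝ)^2 / n) := by
                apply mul_le_mul_of_nonneg_left hA2 (by positivity)
            _ = (j:ℝ)^2 * y^j / (Nat.factorial j : ℝ) / n := by ring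
            _ ≤ (4*y)^j / (Nat.factorial j : ℝ) / n := by
                gcongr
                rw [mul_pow]
                exact mul_le_mul_of_nonneg_right (sq_le_four_pow j) (by positivity)
      _ = (∑ j ∈ Finset.range (n+1), (4*y)^j / (Nat.factorial j : ℝ)) / n := by
          rw [Finset.sum_div]
      _ ≤ Real.exp (4*y) / n := by
          gcongr
          exact Real.sum_le_exp_of_nonneg (by positivity) (n+1)
  -- bound S2
  have hbound2 : ‖S2‖ ≤ Real.exp (2*y) * Real.exp y / n := by
    rw [hS2]
    calc ‖Complex.exp w - ∑ j ∈ Finset.range (n+1), w ^ j / (Nat.factorial j : ℂ)‖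
        ≤ ‖w‖^(n+1) / (Nat.factorial (n+1)) * Real.exp ‖w‖ := exp_tail_bound w (n+1)
      _ ≤ Real.exp (2*y) / n * Real.exp y := by
          rw [hwn]
          apply mul_le_mul_of_nonneg_right ?_ (Real.exp_nonneg y)
          -- y^(n+1)/(n+1)! ≤ exp(2y)/n
          have h1 : y^(n+1) / (Nat.factorial (n+1)) = (2*y)^(n+1) / (Nat.factorial (n+1)) / 2^(n+1) := by
            rw [mul_pow]
            field_simp
          rw [h1]
          have h2 : (2*y)^(n+1) / ((Nat.factorial (n+1)) : ℝ) ≤ Real.exp (2*y) :=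
            term_le_exp (by positivity) (n+1)
          calc (2*y)^(n+1) / ((Nat.factorial (n+1)) : ℝ) / 2^(n+1)
              ≤ Real.exp (2*y) / 2^(n+1) := by gcongr
            _ ≤ Real.exp (2*y) / n := by
                gcongr
                exact nat_le_two_pow_succ n
      _ = Real.exp (2*y) * Real.exp y / n := by ring
  calc ‖Complex.exp (Complex.I * z)‖ * ‖S1 - S2‖
      ≤ Real.exp y * (‖S1‖ + ‖S2‖) := by
        apply mul_le_mul hexpIz (norm_sub_le S1 S2) (norm_nonneg _) (Real.exp_nonneg y)
    _ ≤ Real.exp y * (Real.exp (4*y) / n + Real.exp (2*y) * Real.exp y / n) := by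
        gcongr
    _ = Real.exp y * (Real.exp (4*y) + Real.exp (2*y) * Real.exp y) / n := by ring
end

section
/- For every integer n ≥ 2 and every z ∈ ℂ with z ≠ 0, the complex derivative of z_n^{(1)} satisfies z_n^{(1)′}(z) = (n(n+1)/z)·h_n^{(1)}(z) − (2n−1)·h_{n−1}^{(1)}(z) + z·h_{n−2}^{(1)}(z). -/
open Complex

open Finset

/-- `z_n^{(1)}(z) = h_n^{(1)}(z) + z * h_n^{(1)'}(z)`. -/
noncomputable def zfun (n : ℕ) (z : ℂ) : ℂ :=
  sphHankel n z + z * deriv (sphHankel n) z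

noncomputable def coef (n k : ℕ) : ℂ :=
  Complex.I ^ k * (Nat.factorial (n + k) : ℂ) /
    ((Nat.factorial k : ℂ) * 2 ^ k * (Nat.factorial (n - k) : ℂ))

noncomputable def Fs (n : ℕ) (z : ℂ) : ℂ :=
  ∑ k ∈ Finset.range (n + 1), coef n k * z ^ (-(k : ℤ) - 1)

noncomputable def Gs (n : ℕ) (z : ℂ) : ℂ :=
  ∑ k ∈ Finset.range (n + 1), coef n k * (-(k : ℂ) - 1) * z ^ (-(k : ℤ) - 2)

lemma sphHankel_eq (n : ℕ) (z : ℂ) (hz : z ≠ 0) :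
    sphHankel n z = (-I) ^ (n + 1) * Complex.exp (I * z) * Fs n z := by
  rw [sphHankel, Fs, Finset.mul_sum, Finset.mul_sum]
  refine Finset.sum_congr rfl fun k _ => ?_
  have hk : ((Nat.factorial k : ℂ)) ≠ 0 := Nat.cast_ne_zero.2 (Nat.factorial_ne_zero k)
  have hnk : ((Nat.factorial (n - k) : ℂ)) ≠ 0 := Nat.cast_ne_zero.2 (Nat.factorial_ne_zero _)
  have hzp : z ^ (-(k : ℤ) - 1) = (z ^ (k + 1))⁻¹ := by
    rw [show (-(k : ℤ) - 1) = -((k + 1 : ℕ) : ℤ) by push_cast; ring, zpow_neg, zpow_natCast]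
  have hzk : z ^ k ≠ 0 := pow_ne_zero _ hz
  have h2k : (2:ℂ) ^ k ≠ 0 := pow_ne_zero _ two_ne_zero
  have hzk1 : z ^ (k+1) ≠ 0 := pow_ne_zero _ hz
  rw [coef, hzp]
  simp only [div_eq_mul_inv, mul_inv, mul_pow, inv_pow, pow_succ]
  ring

lemma hasDerivAt_Fs (n : ℕ) (z : ℂ) (hz : z ≠ 0) :
    HasDerivAt (Fs n) (Gs n z) z := by
  have h : ∀ k ∈ Finset.range (n + 1),
      HasDerivAt (fun w : ℂ => coef n k * w ^ (-(k : ℤ) - 1))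
        (coef n k * (-(k : ℂ) - 1) * z ^ (-(k : ℤ) - 2)) z := by
    intro k _
    have h := (hasDerivAt_zpow (-(k : ℤ) - 1) z (Or.inl hz)).const_mul (coef n k)
    have e1 : ((-(k : ℤ) - 1 : ℤ) : ℂ) = -(k : ℂ) - 1 := by push_cast; ring
    have e2 : (-(k : ℤ) - 1 - 1) = (-(k : ℤ) - 2) := by ring
    rw [e1, e2] at h
    simpa [mul_assoc] using h
  have := HasDerivAt.fun_sum h
  exact this

lemma hasDerivAt_sphHankel (n : ℕ) (z : ℂ) (hz : z ≠ 0) :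
    HasDerivAt (sphHankel n)
      ((-I) ^ (n + 1) * Complex.exp (I * z) * (I * Fs n z + Gs n z)) z := by
  have hexp : HasDerivAt (fun w : ℂ => Complex.exp (I * w)) (Complex.exp (I * z) * I) z := by
    simpa using (((hasDerivAt_id z).const_mul I).cexp)
  have hmul : HasDerivAt (fun w : ℂ => (-I) ^ (n + 1) * Complex.exp (I * w) * Fs n w)
      ((-I) ^ (n + 1) * (Complex.exp (I * z) * I) * Fs n z
        + (-I) ^ (n + 1) * Complex.exp (I * z) * Gs n z) z :=
    ((hexp.const_mul ((-I) ^ (n + 1))).mul (hasDerivAt_Fs n z hz))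
  have heq : sphHankel n =ᶠ[nhds z] fun w => (-I) ^ (n + 1) * Complex.exp (I * w) * Fs n w := by
    filter_upwards [isOpen_compl_singleton.mem_nhds hz] with w hw
    exact sphHankel_eq n w hw
  have := hmul.congr_of_eventuallyEq heq
  convert this using 1
  · rfl
  · rfl
  · ring

noncomputable def qc (n k : ℕ) : ℂ :=
  (Nat.factorial (n + k) : ℂ) /
    ((Nat.factorial k : ℂ) * 2 ^ k * (Nat.factorial (n - k) : ℂ))

lemma coef_eq (n k : ℕ) : coef n k = I ^ k * qc n k := by
  rw [coef, qc]; ring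

lemma fact_cast_ne (a : ℕ) : ((Nat.factorial a : ℂ)) ≠ 0 :=
  Nat.cast_ne_zero.2 (Nat.factorial_ne_zero a)

lemma qc_step (k j : ℕ) :
    (((k : ℂ) + (j : ℂ) + 2) - k) * qc (k + j + 2) k
      = qc (k + j + 2) (k + 1) - qc (k + j + 1) (k + 1) := by
  have hB : ((Nat.factorial k : ℂ)) ≠ 0 := fact_cast_ne k
  have hC : ((Nat.factorial j : ℂ)) ≠ 0 := fact_cast_ne j
  have ht : ((2:ℂ)) ^ k ≠ 0 := pow_ne_zero _ two_ne_zero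
  have hj1 : ((j:ℂ) + 1) ≠ 0 := by
    have h : ((j + 1 : ℕ) : ℂ) ≠ 0 := Nat.cast_ne_zero.2 (by omega)
    push_cast at h; exact h
  have hj2 : ((j:ℂ) + 2) ≠ 0 := by
    have h : ((j + 2 : ℕ) : ℂ) ≠ 0 := Nat.cast_ne_zero.2 (by omega)
    push_cast at h; exact h
  have hk1 : ((k:ℂ) + 1) ≠ 0 := by
    have h : ((k + 1 : ℕ) : ℂ) ≠ 0 := Nat.cast_ne_zero.2 (by omega)
    push_cast at h; exact h
  have e1 : k + j + 2 - k = j + 2 := by omega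
  have e2 : k + j + 2 - (k + 1) = j + 1 := by omega
  have e3 : k + j + 1 - (k + 1) = j := by omega
  have f2 : ((Nat.factorial (j + 2) : ℂ)) = ((j:ℂ) + 2) * (((j:ℂ) + 1) * (Nat.factorial j : ℂ)) := by
    rw [show j + 2 = (j + 1) + 1 by omega, Nat.factorial_succ, Nat.factorial_succ]
    push_cast; ring
  have f1 : ((Nat.factorial (j + 1) : ℂ)) = ((j:ℂ) + 1) * (Nat.factorial j : ℂ) := by
    rw [Nat.factorial_succ]; push_cast; ring
  have fk : ((Nat.factorial (k + 1) : ℂ)) = ((k:ℂ) + 1) * (Nat.factorial k : ℂ) := by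
    rw [Nat.factorial_succ]; push_cast; ring
  have fA : ((Nat.factorial (k + j + 2 + (k + 1)) : ℂ))
      = (2 * (k:ℂ) + (j:ℂ) + 3) * ((Nat.factorial (k + j + 2 + k) : ℂ)) := by
    rw [show k + j + 2 + (k + 1) = (k + j + 2 + k) + 1 by omega, Nat.factorial_succ]
    push_cast; ring
  have fA2 : Nat.factorial (k + j + 1 + (k + 1)) = Nat.factorial (k + j + 2 + k) := by
    rw [show k + j + 1 + (k + 1) = k + j + 2 + k by omega]
  rw [qc, qc, qc, e1, e2, e3, fA2, fA, f2, f1, fk, pow_succ]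
  have hd0 : ((Nat.factorial k : ℂ)) * (2:ℂ) ^ k
      * (((j:ℂ) + 2) * (((j:ℂ) + 1) * (Nat.factorial j : ℂ))) ≠ 0 :=
    mul_ne_zero (mul_ne_zero hB ht) (mul_ne_zero hj2 (mul_ne_zero hj1 hC))
  have hd1 : (((k:ℂ) + 1) * (Nat.factorial k : ℂ)) * ((2:ℂ) ^ k * 2)
      * (((j:ℂ) + 1) * (Nat.factorial j : ℂ)) ≠ 0 :=
    mul_ne_zero (mul_ne_zero (mul_ne_zero hk1 hB) (mul_ne_zero ht two_ne_zero))
      (mul_ne_zero hj1 hC)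
  have hd2 : (((k:ℂ) + 1) * (Nat.factorial k : ℂ)) * ((2:ℂ) ^ k * 2)
      * ((Nat.factorial j : ℂ)) ≠ 0 :=
    mul_ne_zero (mul_ne_zero (mul_ne_zero hk1 hB) (mul_ne_zero ht two_ne_zero)) hC
  rw [div_sub_div _ _ hd1 hd2, ← mul_div_assoc, div_eq_div_iff hd0 (mul_ne_zero hd1 hd2)]
  ring

lemma qc_last (m : ℕ) : qc (m + 1) m = qc (m + 1) (m + 1) := by
  have hB : ((Nat.factorial m : ℂ)) ≠ 0 := fact_cast_ne m
  have ht : ((2:ℂ)) ^ m ≠ 0 := pow_ne_zero _ two_ne_zero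
  have hm1 : ((m:ℂ) + 1) ≠ 0 := by
    have h : ((m + 1 : ℕ) : ℂ) ≠ 0 := Nat.cast_ne_zero.2 (by omega)
    push_cast at h; exact h
  have e1 : m + 1 - m = 1 := by omega
  have e2 : m + 1 - (m + 1) = 0 := by omega
  have fm : ((Nat.factorial (m + 1) : ℂ)) = ((m:ℂ) + 1) * (Nat.factorial m : ℂ) := by
    rw [Nat.factorial_succ]; push_cast; ring
  have fA : ((Nat.factorial (m + 1 + (m + 1)) : ℂ))
      = (2 * (m:ℂ) + 2) * ((Nat.factorial (m + 1 + m) : ℂ)) := by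
    rw [show m + 1 + (m + 1) = (m + 1 + m) + 1 by omega, Nat.factorial_succ]
    push_cast; ring
  rw [qc, qc, e1, e2, fA, fm, pow_succ, Nat.factorial_one, Nat.factorial_zero]
  have hd0 : ((Nat.factorial m : ℂ)) * (2:ℂ) ^ m * ((1:ℕ) : ℂ) ≠ 0 := by
    simpa using mul_ne_zero hB ht
  have hd1 : (((m:ℂ) + 1) * (Nat.factorial m : ℂ)) * ((2:ℂ) ^ m * 2) * ((1:ℕ) : ℂ) ≠ 0 := by
    simpa using mul_ne_zero (mul_ne_zero hm1 hB) (mul_ne_zero ht two_ne_zero)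
  rw [div_eq_div_iff hd0 hd1]
  push_cast
  ring

lemma step_main (m k : ℕ) (hk : k < m) :
    (((m : ℂ) + 1) - k) * coef (m + 1) k
      = I * (coef m (k + 1) - coef (m + 1) (k + 1)) := by
  obtain ⟨j, rfl⟩ : ∃ j, m = k + j + 1 := ⟨m - k - 1, by omega⟩
  have e : k + j + 1 + 1 = k + j + 2 := by omega
  rw [e, coef_eq, coef_eq, coef_eq]
  have hI : I * I ^ (k + 1) = -(I ^ k) := by
    rw [pow_succ, ← mul_assoc, mul_comm I (I ^ k), mul_assoc, Complex.I_mul_I]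
    ring
  have hq := qc_step k j
  rw [e] at hq ⊢
  push_cast
  linear_combination (I ^ k) * hq + (qc (k + j + 2) (k + 1) - qc (k + j + 1) (k + 1)) * hI

lemma step_last (m : ℕ) :
    (((m : ℂ) + 1) - m) * coef (m + 1) m = I * (0 - coef (m + 1) (m + 1)) := by
  rw [coef_eq, coef_eq, qc_last]
  have hI : I * I ^ (m + 1) = -(I ^ m) := by
    rw [pow_succ, ← mul_assoc, mul_comm I (I ^ m), mul_assoc, Complex.I_mul_I]
    ring
  calc (((m : ℂ) + 1) - m) * (I ^ m * qc (m + 1) (m + 1))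
      = I ^ m * qc (m + 1) (m + 1) := by ring
    _ = I * (0 - I ^ (m + 1) * qc (m + 1) (m + 1)) := by
        rw [zero_sub, mul_neg, ← mul_assoc, hI]; ring

lemma coef_zero (n : ℕ) : coef n 0 = 1 := by
  rw [coef]
  simp only [pow_zero, Nat.factorial_zero, Nat.add_zero, Nat.sub_zero, Nat.cast_one,
    one_mul, mul_one]
  exact div_self (fact_cast_ne n)

lemma Fs_peel (n : ℕ) (z : ℂ) :
    I * Fs n z = (∑ k ∈ Finset.range n, I * coef n (k + 1) * z ^ (-(k : ℤ) - 2))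
      + I * z ^ (-1 : ℤ) := by
  rw [Fs, Finset.sum_range_succ', mul_add, Finset.mul_sum]
  congr 1
  · refine Finset.sum_congr rfl fun i _ => ?_
    rw [show (-((i + 1 : ℕ) : ℤ) - 1) = (-(i : ℤ) - 2) by push_cast; ring]
    ring
  · rw [coef_zero]
    norm_num

lemma key (m : ℕ) (z : ℂ) (hz : z ≠ 0) :
    I * Fs (m + 1) z + Gs (m + 1) z
      = I * Fs m z - ((m : ℂ) + 2) / z * Fs (m + 1) z := by
  have hzp : ∀ k : ℕ, z ^ (-(k : ℤ) - 1) * z⁻¹ = z ^ (-(k : ℤ) - 2) := by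
    intro k
    rw [← zpow_neg_one z, ← zpow_add₀ hz]
    congr 1
    ring
  have hGF : Gs (m + 1) z + ((m : ℂ) + 2) / z * Fs (m + 1) z
      = ∑ k ∈ Finset.range (m + 2),
          coef (m + 1) k * (((m : ℂ) + 1) - k) * z ^ (-(k : ℤ) - 2) := by
    rw [Gs, Fs, Finset.mul_sum, ← Finset.sum_add_distrib]
    refine Finset.sum_congr rfl fun k _ => ?_
    have h1 : ((m : ℂ) + 2) / z * (coef (m + 1) k * z ^ (-(k : ℤ) - 1))
        = coef (m + 1) k * ((m : ℂ) + 2) * z ^ (-(k : ℤ) - 2) := by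
      rw [← hzp k, div_eq_mul_inv]
      ring
    rw [h1]
    ring
  have hstep : ∀ k ∈ Finset.range (m + 1),
      coef (m + 1) k * (((m : ℂ) + 1) - k) * z ^ (-(k : ℤ) - 2)
        = (I * ((if k + 1 ≤ m then coef m (k + 1) else 0) - coef (m + 1) (k + 1)))
            * z ^ (-(k : ℤ) - 2) := by
    intro k hk
    have hk' : k ≤ m := Nat.lt_succ_iff.mp (Finset.mem_range.mp hk)
    rcases lt_or_eq_of_le hk' with h | h
    · rw [if_pos (by omega), mul_comm (coef (m + 1) k), step_main m k h]
    · subst h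
      rw [if_neg (by omega), mul_comm (coef (k + 1) k), step_last k]
  have hzero : coef (m + 1) (m + 1) * (((m : ℂ) + 1) - ((m + 1 : ℕ) : ℂ))
      * z ^ (-((m + 1 : ℕ) : ℤ) - 2) = 0 := by
    have h : (((m : ℂ) + 1) - ((m + 1 : ℕ) : ℂ)) = 0 := by push_cast; ring
    rw [h, mul_zero, zero_mul]
  have first : ∑ k ∈ Finset.range (m + 1),
      I * (if k + 1 ≤ m then coef m (k + 1) else 0) * z ^ (-(k : ℤ) - 2)
      = ∑ k ∈ Finset.range m, I * coef m (k + 1) * z ^ (-(k : ℤ) - 2) := by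
    rw [Finset.sum_range_succ, if_neg (by omega)]
    simp only [mul_zero, zero_mul, add_zero]
    refine Finset.sum_congr rfl fun k hk => ?_
    rw [if_pos (Nat.succ_le_of_lt (Finset.mem_range.mp hk))]
  have hsum : ∑ k ∈ Finset.range (m + 1),
      coef (m + 1) k * (((m : ℂ) + 1) - k) * z ^ (-(k : ℤ) - 2)
      = (∑ k ∈ Finset.range m, I * coef m (k + 1) * z ^ (-(k : ℤ) - 2))
        - ∑ k ∈ Finset.range (m + 1), I * coef (m + 1) (k + 1) * z ^ (-(k : ℤ) - 2) := by
    rw [Finset.sum_congr rfl hstep, ← first, ← Finset.sum_sub_distrib]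
    exact Finset.sum_congr rfl fun k _ => by ring
  have main : Gs (m + 1) z + ((m : ℂ) + 2) / z * Fs (m + 1) z
      = I * Fs m z - I * Fs (m + 1) z := by
    rw [hGF, Finset.sum_range_succ, hzero, add_zero, hsum, Fs_peel, Fs_peel]
    ring
  linear_combination main

lemma hasDerivAt_sphHankel_succ (m : ℕ) (z : ℂ) (hz : z ≠ 0) :
    HasDerivAt (sphHankel (m + 1))
      (sphHankel m z - ((m : ℂ) + 2) / z * sphHankel (m + 1) z) z := by
  have h := hasDerivAt_sphHankel (m + 1) z hz
  have e : (-I) ^ (m + 1 + 1) * Complex.exp (I * z) * (I * Fs (m + 1) z + Gs (m + 1) z)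
      = sphHankel m z - ((m : ℂ) + 2) / z * sphHankel (m + 1) z := by
    rw [key m z hz, sphHankel_eq m z hz, sphHankel_eq (m + 1) z hz]
    have hII : ((-I : ℂ)) * I = 1 := by
      rw [neg_mul, Complex.I_mul_I]; norm_num
    calc (-I) ^ (m + 1 + 1) * Complex.exp (I * z)
          * (I * Fs m z - ((m : ℂ) + 2) / z * Fs (m + 1) z)
        = ((-I) * I) * ((-I) ^ (m + 1) * Complex.exp (I * z) * Fs m z)
          - ((m : ℂ) + 2) / z * ((-I) ^ (m + 1 + 1) * Complex.exp (I * z) * Fs (m + 1) z) := by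
          rw [pow_succ]; ring
      _ = _ := by rw [hII]; ring
  exact e ▸ h

theorem zfun_deriv_recurrence (n : ℕ) (hn : 2 ≤ n) (z : ℂ) (hz : z ≠ 0) :
    deriv (zfun n) z =
      (n : ℂ) * ((n : ℂ) + 1) / z * sphHankel n z
        - (2 * (n : ℂ) - 1) * sphHankel (n - 1) z + z * sphHankel (n - 2) z := by
  obtain ⟨m, rfl⟩ : ∃ m, n = m + 2 := ⟨n - 2, by omega⟩
  have e1 : m + 2 - 1 = m + 1 := by omega
  have e2 : m + 2 - 2 = m := by omega
  rw [e1, e2]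
  have hd1 := hasDerivAt_sphHankel_succ m z hz
  have hd2 := hasDerivAt_sphHankel_succ (m + 1) z hz
  simp only [show m + 1 + 1 = m + 2 from by omega] at hd2
  have heq : zfun (m + 2) =ᶠ[nhds z]
      fun w => w * sphHankel (m + 1) w - (((m + 1 : ℕ) : ℂ) + 1) * sphHankel (m + 2) w := by
    filter_upwards [isOpen_compl_singleton.mem_nhds hz] with w hw
    have hd := hasDerivAt_sphHankel_succ (m + 1) w hw
    simp only [show m + 1 + 1 = m + 2 from by omega] at hd
    rw [zfun, hd.deriv]
    have hw' : w ≠ 0 := hw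
    field_simp
    ring
  have hmul := (hasDerivAt_id z).mul hd1
  have hφ := hmul.sub (hd2.const_mul (((m + 1 : ℕ) : ℂ) + 1))
  rw [heq.deriv_eq]
  have : deriv (fun w => w * sphHankel (m + 1) w
      - (((m + 1 : ℕ) : ℂ) + 1) * sphHankel (m + 2) w) z
      = 1 * sphHankel (m + 1) z
          + z * (sphHankel m z - ((m : ℂ) + 2) / z * sphHankel (m + 1) z)
        - (((m + 1 : ℕ) : ℂ) + 1)
            * (sphHankel (m + 1) z - (((m + 1 : ℕ) : ℂ) + 2) / z * sphHankel (m + 2) z) :=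
    hφ.deriv
  rw [this]
  push_cast
  field_simp
  ring
end

section
/- Let z ∈ ℂ with z ≠ 0. Then there exist N₀ ∈ ℕ and C > 0 such that for all integers n ≥ N₀ one has h_n^{(1)}(z) ≠ 0 and |z·z_n^{(1)′}(z)/h_n^{(1)}(z) − n(n+1) + z²| ≤ C/n; that is, z·z_n^{(1)′}(z)/h_n^{(1)}(z) = n(n+1) − z² + O(1/n) as n → ∞. -/
open Complex

open Finset

noncomputable def cc (n k : ℕ) : ℂ :=
  (-Complex.I) ^ (n + 1) * Complex.I ^ k / ((Nat.factorial k : ℂ) * 2 ^ k) *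
    ((Nat.factorial (n + k) : ℂ) / (Nat.factorial (n - k) : ℂ))

noncomputable def EE (m : ℤ) (z : ℂ) : ℂ := Complex.exp (Complex.I * z) * z ^ m

noncomputable def DD (m : ℤ) (z : ℂ) : ℂ := Complex.I * EE m z + (m : ℂ) * EE (m - 1) z

noncomputable def DD2 (m : ℤ) (z : ℂ) : ℂ := Complex.I * DD m z + (m : ℂ) * DD (m - 1) z

lemma hasDerivAt_EE (m : ℤ) {z : ℂ} (hz : z ≠ 0) : HasDerivAt (EE m) (DD m z) z := by
  have h1 : HasDerivAt (fun w : ℂ => Complex.exp (Complex.I * w))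
      (Complex.exp (Complex.I * z) * Complex.I) z := by
    simpa using (((hasDerivAt_id z).const_mul Complex.I).cexp)
  have h2 : HasDerivAt (fun w : ℂ => w ^ m) ((m : ℂ) * z ^ (m - 1)) z :=
    hasDerivAt_zpow m z (Or.inl hz)
  have := h1.fun_mul h2
  simp only [EE, DD]
  refine this.congr_deriv ?_
  ring

lemma hasDerivAt_DD (m : ℤ) {z : ℂ} (hz : z ≠ 0) : HasDerivAt (DD m) (DD2 m z) z := by
  have := ((hasDerivAt_EE m hz).const_mul Complex.I).fun_add
    ((hasDerivAt_EE (m - 1) hz).const_mul (m : ℂ))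
  exact this

noncomputable def GG (n : ℕ) (z : ℂ) : ℂ := ∑ k ∈ range (n + 1), cc n k * EE (-(k + 1)) z
noncomputable def GG1 (n : ℕ) (z : ℂ) : ℂ := ∑ k ∈ range (n + 1), cc n k * DD (-(k + 1)) z
noncomputable def GG2 (n : ℕ) (z : ℂ) : ℂ := ∑ k ∈ range (n + 1), cc n k * DD2 (-(k + 1)) z

lemma hasDerivAt_GG (n : ℕ) {z : ℂ} (hz : z ≠ 0) : HasDerivAt (GG n) (GG1 n z) z := by
  exact HasDerivAt.fun_sum fun k _ => (hasDerivAt_EE _ hz).const_mul (cc n k)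

lemma hasDerivAt_GG1 (n : ℕ) {z : ℂ} (hz : z ≠ 0) : HasDerivAt (GG1 n) (GG2 n z) z := by
  exact HasDerivAt.fun_sum fun k _ => (hasDerivAt_DD _ hz).const_mul (cc n k)

lemma sphHankel_eq_s7 (n : ℕ) {z : ℂ} (hz : z ≠ 0) : sphHankel n z = GG n z := by
  unfold sphHankel GG
  rw [Finset.mul_sum]
  refine Finset.sum_congr rfl fun k _ => ?_
  unfold cc EE
  have h2z : (2 * z) ^ k ≠ 0 := pow_ne_zero _ (by simp [hz])
  rw [show (-((k : ℤ) + 1)) = -(((k + 1 : ℕ) : ℤ)) by push_cast; ring, zpow_neg, zpow_natCast]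
  field_simp
  ring

noncomputable def rr (n k : ℕ) : ℂ :=
  (Nat.factorial (n + k) : ℂ) / ((Nat.factorial k : ℂ) * 2 ^ k * (Nat.factorial (n - k) : ℂ))

lemma cc_eq (n k : ℕ) : cc n k = (-Complex.I) ^ (n + 1) * Complex.I ^ k * rr n k := by
  unfold cc rr; ring

lemma rr_rec (n k : ℕ) (hk : k < n) :
    2 * ((k : ℂ) + 1) * rr n (k + 1) = ((n : ℂ) - k) * ((n : ℂ) + k + 1) * rr n k := by
  unfold rr
  have h1 : (n + (k + 1)).factorial = (n + k + 1) * (n + k).factorial := by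
    rw [show n + (k + 1) = (n + k) + 1 by ring, Nat.factorial_succ]
  have h2 : (n - k).factorial = (n - k) * (n - (k + 1)).factorial := by
    rw [show n - k = (n - (k + 1)) + 1 by omega, Nat.factorial_succ]
  have h3 : (k + 1).factorial = (k + 1) * k.factorial := Nat.factorial_succ k
  rw [h1, h2, h3]
  have hfk : (k.factorial : ℂ) ≠ 0 := Nat.cast_ne_zero.2 (Nat.factorial_ne_zero k)
  have hfnk : ((n - (k + 1)).factorial : ℂ) ≠ 0 := Nat.cast_ne_zero.2 (Nat.factorial_ne_zero _)
  have hfnk0 : ((n + k).factorial : ℂ) ≠ 0 := Nat.cast_ne_zero.2 (Nat.factorial_ne_zero _)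
  have hnkne : ((n - k : ℕ) : ℂ) = (n : ℂ) - k := Nat.cast_sub hk.le
  push_cast [hnkne]
  have hne : (n : ℂ) - k ≠ 0 := by
    have : ((n - k : ℕ) : ℂ) ≠ 0 := Nat.cast_ne_zero.2 (by omega)
    rwa [hnkne] at this
  have hk1 : (k : ℂ) + 1 ≠ 0 := by exact_mod_cast (Nat.cast_ne_zero (R := ℂ)).2 (Nat.succ_ne_zero k)
  have h2k : (2 : ℂ) ^ k ≠ 0 := pow_ne_zero _ two_ne_zero
  field_simp
  ring

lemma cc_rec (n k : ℕ) (hk : k < n) :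
    (-2 * Complex.I * ((k : ℂ) + 1)) * cc n (k + 1) =
      ((n : ℂ) - k) * ((n : ℂ) + k + 1) * cc n k := by
  have h := rr_rec n k hk
  rw [cc_eq, cc_eq, pow_succ]
  linear_combination ((-Complex.I) ^ (n + 1) * Complex.I ^ k) * h +
    ((-Complex.I) ^ (n + 1) * Complex.I ^ k * (-2) * ((k : ℂ) + 1) * rr n (k + 1)) *
      Complex.I_mul_I

lemma EE_perk (m : ℤ) {z : ℂ} (hz : z ≠ 0) (M : ℂ) :
    z ^ 2 * DD2 m z + 2 * z * DD m z + (z ^ 2 - M) * EE m z =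
      2 * Complex.I * ((m : ℂ) + 1) * EE (m + 1) z +
        ((m : ℂ) * ((m : ℂ) + 1) - M) * EE m z := by
  have e1 : z ^ (m - 1 : ℤ) = z ^ (m - 2 : ℤ) * z := by
    rw [← zpow_add_one₀ hz]; congr 1; ring
  have e2 : z ^ (m : ℤ) = z ^ (m - 2 : ℤ) * z * z := by
    rw [← zpow_add_one₀ hz, ← zpow_add_one₀ hz]; congr 1; ring
  have e3 : z ^ (m + 1 : ℤ) = z ^ (m - 2 : ℤ) * z * z * z := by
    rw [← zpow_add_one₀ hz, ← zpow_add_one₀ hz, ← zpow_add_one₀ hz]; congr 1; ring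
  simp only [DD2, DD, EE, show (m - 1 - 1 : ℤ) = m - 2 by ring, e1, e2, e3]
  have hmm : ((m - 1 : ℤ) : ℂ) = (m : ℂ) - 1 := by push_cast; ring
  rw [hmm]
  linear_combination (Complex.exp (Complex.I * z) * z ^ (m - 2 : ℤ) * z ^ 2 *
    z ^ 2) * Complex.I_sq

lemma GG_ode (n : ℕ) {z : ℂ} (hz : z ≠ 0) :
    z ^ 2 * GG2 n z + 2 * z * GG1 n z +
      (z ^ 2 - (n : ℂ) * ((n : ℂ) + 1)) * GG n z = 0 := by
  set M : ℂ := (n : ℂ) * ((n : ℂ) + 1) with hM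
  unfold GG GG1 GG2
  rw [Finset.mul_sum, Finset.mul_sum, Finset.mul_sum, ← Finset.sum_add_distrib,
    ← Finset.sum_add_distrib]
  have key : ∀ k ∈ range (n + 1),
      z ^ 2 * (cc n k * DD2 (-(k + 1)) z) + 2 * z * (cc n k * DD (-(k + 1)) z) +
        (z ^ 2 - M) * (cc n k * EE (-(k + 1)) z) =
      (-2 * Complex.I * (k : ℂ)) * cc n k * EE (-(k : ℤ)) z
        - ((n : ℂ) - k) * ((n : ℂ) + k + 1) * cc n k * EE (-(k + 1)) z := by
    intro k _
    have h := EE_perk (-(k + 1)) hz M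
    have hc1 : ((-(k + 1 : ℤ) : ℤ) : ℂ) = -((k : ℂ) + 1) := by push_cast; ring
    have hc2 : (-(k + 1 : ℤ) + 1 : ℤ) = -(k : ℤ) := by ring
    rw [hc2, hc1] at h
    have expand : z ^ 2 * (cc n k * DD2 (-(k + 1)) z) + 2 * z * (cc n k * DD (-(k + 1)) z) +
        (z ^ 2 - M) * (cc n k * EE (-(k + 1)) z) =
        cc n k * (z ^ 2 * DD2 (-(k + 1)) z + 2 * z * DD (-(k + 1)) z +
          (z ^ 2 - M) * EE (-(k + 1)) z) := by ring
    rw [expand, h, hM]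
    ring
  rw [Finset.sum_congr rfl key]
  rw [Finset.sum_sub_distrib]
  rw [sub_eq_zero]
  -- LHS sum: telescek
  rw [Finset.sum_range_succ' (fun k => (-2 * Complex.I * (k : ℂ)) * cc n k * EE (-(k : ℤ)) z) n]
  rw [Finset.sum_range_succ (fun k => ((n : ℂ) - k) * ((n : ℂ) + k + 1) * cc n k * EE (-(k + 1)) z) n]
  simp only [Nat.cast_zero, mul_zero, zero_mul, mul_zero, add_zero, sub_self]
  refine Finset.sum_congr rfl fun k hk => ?_
  have hrec := cc_rec n k (Finset.mem_range.1 hk)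
  have : ((k + 1 : ℕ) : ℂ) = (k : ℂ) + 1 := by push_cast; ring
  have hexp : (-(((k : ℕ) + 1 : ℕ) : ℤ)) = -((k : ℤ) + 1) := by push_cast; ring
  calc (-2 * Complex.I * ((k + 1 : ℕ) : ℂ)) * cc n (k + 1) * EE (-((k + 1 : ℕ) : ℤ)) z
      = ((-2 * Complex.I * ((k : ℂ) + 1)) * cc n (k + 1)) * EE (-((k : ℤ) + 1)) z := by
        rw [this, hexp]
    _ = ((n : ℂ) - k) * ((n : ℂ) + k + 1) * cc n k * EE (-(k + 1)) z := by rw [hrec]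

lemma sphHankel_eventuallyEq (n : ℕ) {z : ℂ} (hz : z ≠ 0) :
    sphHankel n =ᶠ[nhds z] GG n := by
  filter_upwards [compl_singleton_mem_nhds hz] with w hw
  exact sphHankel_eq_s7 n hw

lemma deriv_sphHankel (n : ℕ) {z : ℂ} (hz : z ≠ 0) :
    deriv (sphHankel n) z = GG1 n z :=
  ((sphHankel_eventuallyEq n hz).deriv_eq).trans (hasDerivAt_GG n hz).deriv

lemma zfun_eventuallyEq (n : ℕ) {z : ℂ} (hz : z ≠ 0) :
    zfun n =ᶠ[nhds z] fun w => GG n w + w * GG1 n w := by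
  filter_upwards [compl_singleton_mem_nhds hz] with w hw
  simp only [zfun, sphHankel_eq_s7 n hw, deriv_sphHankel n hw]

lemma deriv_zfun (n : ℕ) {z : ℂ} (hz : z ≠ 0) :
    deriv (zfun n) z = 2 * GG1 n z + z * GG2 n z := by
  rw [(zfun_eventuallyEq n hz).deriv_eq]
  have h : HasDerivAt (fun w => GG n w + w * GG1 n w)
      (GG1 n z + (1 * GG1 n z + z * GG2 n z)) z :=
    (hasDerivAt_GG n hz).add ((hasDerivAt_id z).mul (hasDerivAt_GG1 n hz))
  rw [h.deriv]; ring

lemma key_identity_s7 (n : ℕ) {z : ℂ} (hz : z ≠ 0) :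
    z * deriv (zfun n) z = ((n : ℂ) * ((n : ℂ) + 1) - z ^ 2) * sphHankel n z := by
  rw [deriv_zfun n hz, sphHankel_eq_s7 n hz]
  have := GG_ode n hz
  linear_combination this

noncomputable def ff (z : ℂ) (n j : ℕ) : ℂ :=
  (-2 * Complex.I * z) ^ j / (Nat.factorial j : ℂ) *
    ∏ m ∈ range j, ((n : ℂ) - m) / ((2 * n : ℂ) - m)

lemma ff_eq_zero {z : ℂ} {n j : ℕ} (h : n < j) : ff z n j = 0 := by
  unfold ff
  rw [Finset.prod_eq_zero (Finset.mem_range.2 h) (by simp), mul_zero]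

lemma norm_ff_le (z : ℂ) (n j : ℕ) : ‖ff z n j‖ ≤ ‖z‖ ^ j / (Nat.factorial j : ℝ) := by
  rcases lt_or_ge n j with h | h
  · rw [ff_eq_zero h, norm_zero]
    positivity
  · unfold ff
    rw [norm_mul, norm_div, norm_pow, norm_prod]
    have h1 : ‖(-2 * Complex.I * z)‖ = 2 * ‖z‖ := by
      rw [norm_mul, norm_mul]; simp
    have h2 : ∀ m ∈ range j, ‖((n : ℂ) - m) / ((2 * n : ℂ) - m)‖ ≤ 1 / 2 := by
      intro m hm
      have hm' : m < j := Finset.mem_range.1 hm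
      have hmn : m < n := lt_of_lt_of_le hm' h
      have hmn' : (m : ℝ) < n := by exact_mod_cast hmn
      have e1 : ((n : ℂ) - m) = (((n : ℝ) - m : ℝ) : ℂ) := by push_cast; ring
      have e2 : ((2 * n : ℂ) - m) = (((2 * (n : ℝ) - m : ℝ)) : ℂ) := by push_cast; ring
      rw [e1, e2, ← Complex.ofReal_div, Complex.norm_real, Real.norm_eq_abs]
      have hden : (0 : ℝ) < 2 * (n : ℝ) - m := by linarith
      rw [_root_.abs_of_nonneg (div_nonneg (by linarith) hden.le)]
      rw [div_le_div_iff₀ hden (by norm_num)]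
      linarith
    have h3 : ∏ m ∈ range j, ‖((n : ℂ) - m) / ((2 * n : ℂ) - m)‖ ≤ (1 / 2 : ℝ) ^ j := by
      calc ∏ m ∈ range j, ‖((n : ℂ) - m) / ((2 * n : ℂ) - m)‖
          ≤ ∏ _m ∈ range j, (1 / 2 : ℝ) :=
            Finset.prod_le_prod (fun m _ => norm_nonneg _) h2
        _ = (1 / 2 : ℝ) ^ j := by rw [Finset.prod_const, Finset.card_range]
    have h4 : (0 : ℝ) ≤ ‖(-2 * Complex.I * z)‖ ^ j / ‖((j.factorial : ℂ))‖ := by positivity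
    calc ‖(-2 * Complex.I * z)‖ ^ j / ‖((j.factorial : ℂ))‖ *
          ∏ m ∈ range j, ‖((n : ℂ) - m) / ((2 * n : ℂ) - m)‖
        ≤ ‖(-2 * Complex.I * z)‖ ^ j / ‖((j.factorial : ℂ))‖ * (1 / 2 : ℝ) ^ j :=
          mul_le_mul_of_nonneg_left h3 h4
      _ = ‖z‖ ^ j / (j.factorial : ℝ) := by
          rw [h1, Complex.norm_natCast, mul_pow]
          field_simp
          rw [mul_assoc, ← mul_pow, ← mul_pow]; ring

lemma tendsto_inv_nat_complex : Filter.Tendsto (fun n : ℕ => ((n : ℂ))⁻¹) Filter.atTop (nhds 0) := by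
  have h : Filter.Tendsto (fun n : ℕ => ((n : ℝ))⁻¹) Filter.atTop (nhds 0) :=
    tendsto_inv_atTop_nhds_zero_nat
  have := (Complex.continuous_ofReal.tendsto 0).comp h
  have e : (Complex.ofReal ∘ fun n : ℕ => ((n : ℝ))⁻¹) = fun n : ℕ => ((n : ℂ))⁻¹ := by
    funext n; simp [Function.comp]
  rw [e] at this
  simpa using this

lemma tendsto_factor (m : ℕ) :
    Filter.Tendsto (fun n : ℕ => ((n : ℂ) - m) / ((2 * n : ℂ) - m)) Filter.atTop
      (nhds (1 / 2)) := by
  have h1 : Filter.Tendsto (fun n : ℕ => (1 - (m : ℂ) * ((n : ℂ))⁻¹) / (2 - (m : ℂ) * ((n : ℂ))⁻¹))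
      Filter.atTop (nhds ((1 - (m : ℂ) * 0) / (2 - (m : ℂ) * 0))) := by
    apply Filter.Tendsto.div
    · exact tendsto_const_nhds.sub (tendsto_const_nhds.mul tendsto_inv_nat_complex)
    · exact tendsto_const_nhds.sub (tendsto_const_nhds.mul tendsto_inv_nat_complex)
    · norm_num
  have h2 : ((1 : ℂ) - (m : ℂ) * 0) / (2 - (m : ℂ) * 0) = 1 / 2 := by norm_num
  rw [h2] at h1
  refine h1.congr' ?_
  filter_upwards [Filter.eventually_ge_atTop (m + 1)] with n hn
  have hn0 : (n : ℂ) ≠ 0 := Nat.cast_ne_zero.2 (by omega)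
  have e1 : (n : ℂ) * (1 - (m : ℂ) * ((n : ℂ))⁻¹) = (n : ℂ) - m := by field_simp
  have e2 : (n : ℂ) * (2 - (m : ℂ) * ((n : ℂ))⁻¹) = (2 * n : ℂ) - m := by
    field_simp
  rw [← e1, ← e2, mul_div_mul_left _ _ hn0]

lemma tendsto_ff (z : ℂ) (j : ℕ) :
    Filter.Tendsto (fun n : ℕ => ff z n j) Filter.atTop
      (nhds ((-Complex.I * z) ^ j / (Nat.factorial j : ℂ))) := by
  have hprod : Filter.Tendsto (fun n : ℕ => ∏ m ∈ range j, ((n : ℂ) - m) / ((2 * n : ℂ) - m))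
      Filter.atTop (nhds (∏ _m ∈ range j, (1 / 2 : ℂ))) :=
    tendsto_finset_prod _ (fun m _ => tendsto_factor m)
  have h := hprod.const_mul ((-2 * Complex.I * z) ^ j / (Nat.factorial j : ℂ))
  have e : (-2 * Complex.I * z) ^ j / (Nat.factorial j : ℂ) * (∏ _m ∈ range j, (1 / 2 : ℂ)) =
      (-Complex.I * z) ^ j / (Nat.factorial j : ℂ) := by
    rw [Finset.prod_const, Finset.card_range, div_mul_eq_mul_div, ← mul_pow]
    congr 2
    ring
  rw [e] at h
  exact h

lemma tendsto_sum_ff (z : ℂ) :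
    Filter.Tendsto (fun n : ℕ => ∑ j ∈ range (n + 1), ff z n j) Filter.atTop
      (nhds (Complex.exp (-Complex.I * z))) := by
  have hbound : Summable (fun j : ℕ => ‖z‖ ^ j / (Nat.factorial j : ℝ)) :=
    Real.summable_pow_div_factorial ‖z‖
  have h := tendsto_tsum_of_dominated_convergence (f := fun n j => ff z n j)
    (g := fun j => (-Complex.I * z) ^ j / (Nat.factorial j : ℂ)) hbound
    (fun j => tendsto_ff z j)
    (Filter.Eventually.of_forall fun n j => norm_ff_le z n j)
  have e1 : ∀ n : ℕ, (∑' j : ℕ, ff z n j) = ∑ j ∈ range (n + 1), ff z n j := by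
    intro n
    exact tsum_eq_sum (fun j hj => ff_eq_zero (by simpa using Finset.mem_range.not.1 hj))
  have e2 : (∑' j : ℕ, (-Complex.I * z) ^ j / (Nat.factorial j : ℂ)) =
      Complex.exp (-Complex.I * z) := by
    rw [Complex.exp_eq_exp_ℂ, NormedSpace.exp_eq_tsum_div]
  rw [e2] at h
  exact h.congr e1

lemma term_reflect (n j : ℕ) (hj : j ≤ n) {z : ℂ} (hz : z ≠ 0) :
    (Complex.I ^ (n - j) / ((Nat.factorial (n - j) : ℂ) * (2 * z) ^ (n - j))) *
      ((Nat.factorial (n + (n - j)) : ℂ) / (Nat.factorial (n - (n - j)) : ℂ)) =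
    (Complex.I ^ n * (Nat.factorial (2 * n) : ℂ) / ((Nat.factorial n : ℂ) * (2 * z) ^ n)) *
      ff z n j := by
  have k1 : n + (n - j) = 2 * n - j := by omega
  have k2 : n - (n - j) = j := by omega
  rw [k1, k2]
  have hP : ∏ m ∈ range j, ((n : ℂ) - m) / ((2 * n : ℂ) - m)
      = (n.descFactorial j : ℂ) / ((2 * n).descFactorial j : ℂ) := by
    rw [Finset.prod_div_distrib]
    congr 1
    · rw [Nat.descFactorial_eq_prod_range, Nat.cast_prod]
      refine Finset.prod_congr rfl fun m hm => ?_
      have hmn : m ≤ n := le_trans (Nat.le_of_lt_succ (Nat.lt_succ_of_lt (Finset.mem_range.1 hm))) hj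
      rw [Nat.cast_sub hmn]
    · rw [Nat.descFactorial_eq_prod_range, Nat.cast_prod]
      refine Finset.prod_congr rfl fun m hm => ?_
      have hmn : m ≤ 2 * n := by
        have := Finset.mem_range.1 hm; omega
      rw [Nat.cast_sub hmn]
      push_cast; ring
  unfold ff
  rw [hP]
  have c1 : ((Nat.factorial (n - j) : ℂ)) * (n.descFactorial j : ℂ) = (Nat.factorial n : ℂ) := by
    exact_mod_cast congrArg (Nat.cast : ℕ → ℂ) (Nat.factorial_mul_descFactorial hj)
  have c2 : ((Nat.factorial (2 * n - j) : ℂ)) * ((2 * n).descFactorial j : ℂ)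
      = (Nat.factorial (2 * n) : ℂ) := by
    exact_mod_cast congrArg (Nat.cast : ℕ → ℂ) (Nat.factorial_mul_descFactorial (by omega))
  have hI : Complex.I ^ n = Complex.I ^ (n - j) * Complex.I ^ j := by
    rw [← pow_add]; congr 1; omega
  have h2zp : (2 * z) ^ n = (2 * z) ^ (n - j) * (2 * z) ^ j := by
    rw [← pow_add]; congr 1; omega
  have hIz : (-2 * Complex.I * z) ^ j * Complex.I ^ j = (2 * z) ^ j := by
    rw [← mul_pow]
    congr 1
    linear_combination (-2 * z) * Complex.I_sq
  -- nonzero facts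
  have hf1 : ((Nat.factorial (n - j) : ℂ)) ≠ 0 := Nat.cast_ne_zero.2 (Nat.factorial_ne_zero _)
  have hf2 : ((Nat.factorial j : ℂ)) ≠ 0 := Nat.cast_ne_zero.2 (Nat.factorial_ne_zero _)
  have hf3 : ((Nat.factorial n : ℂ)) ≠ 0 := Nat.cast_ne_zero.2 (Nat.factorial_ne_zero _)
  have hf4 : ((Nat.factorial (2 * n - j) : ℂ)) ≠ 0 := Nat.cast_ne_zero.2 (Nat.factorial_ne_zero _)
  have hd1 : ((n.descFactorial j : ℂ)) ≠ 0 :=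
    Nat.cast_ne_zero.2 (fun h => absurd (Nat.descFactorial_eq_zero_iff_lt.1 h) (not_lt.2 hj))
  have hd2 : (((2 * n).descFactorial j : ℂ)) ≠ 0 :=
    Nat.cast_ne_zero.2 (fun h => absurd (Nat.descFactorial_eq_zero_iff_lt.1 h)
      (not_lt.2 (by omega)))
  have h2zne : (2 * z) ≠ 0 := by simp [hz]
  have h2zj : (2 * z) ^ j ≠ 0 := pow_ne_zero _ h2zne
  have h2znj : (2 * z) ^ (n - j) ≠ 0 := pow_ne_zero _ h2zne
  rw [hI, h2zp]
  rw [← c1, ← c2]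
  field_simp
  ring_nf
  have hI2 : Complex.I ^ (j * 2) * (-2 : ℂ) ^ j = 2 ^ j := by
    rw [mul_comm j 2, pow_mul, Complex.I_sq, ← mul_pow]
    norm_num
  linear_combination (-z ^ j) * hI2

lemma SS_eq (n : ℕ) {z : ℂ} (hz : z ≠ 0) :
    (∑ k ∈ Finset.range (n + 1),
      (Complex.I ^ k / ((Nat.factorial k : ℂ) * (2 * z) ^ k)) *
        ((Nat.factorial (n + k) : ℂ) / (Nat.factorial (n - k) : ℂ)))
    = (Complex.I ^ n * (Nat.factorial (2 * n) : ℂ) / ((Nat.factorial n : ℂ) * (2 * z) ^ n)) *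
        ∑ j ∈ range (n + 1), ff z n j := by
  rw [Finset.mul_sum]
  rw [← Finset.sum_range_reflect (fun k => (Complex.I ^ k / ((Nat.factorial k : ℂ) * (2 * z) ^ k)) *
    ((Nat.factorial (n + k) : ℂ) / (Nat.factorial (n - k) : ℂ))) (n + 1)]
  refine Finset.sum_congr rfl fun j hj => ?_
  have hj' : j ≤ n := Nat.lt_succ_iff.1 (Finset.mem_range.1 hj)
  simp only [Nat.add_sub_cancel]
  exact term_reflect n j hj' hz

lemma eventually_sphHankel_ne (z : ℂ) (hz : z ≠ 0) :
    ∃ N₀ : ℕ, ∀ n : ℕ, N₀ ≤ n → sphHankel n z ≠ 0 := by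
  have h := (tendsto_sum_ff z).eventually_ne (Complex.exp_ne_zero (-Complex.I * z))
  obtain ⟨N₀, hN⟩ := Filter.eventually_atTop.1 h
  refine ⟨N₀, fun n hn => ?_⟩
  have hsum : (∑ j ∈ range (n + 1), ff z n j) ≠ 0 := hN n hn
  unfold sphHankel
  rw [SS_eq n hz]
  have h2zn : (2 * z) ^ n ≠ 0 := pow_ne_zero _ (by simp [hz])
  have hIn : Complex.I ^ n ≠ 0 := pow_ne_zero _ Complex.I_ne_zero
  have hfn : ((Nat.factorial n : ℂ)) ≠ 0 := Nat.cast_ne_zero.2 (Nat.factorial_ne_zero _)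
  have hf2n : ((Nat.factorial (2 * n) : ℂ)) ≠ 0 := Nat.cast_ne_zero.2 (Nat.factorial_ne_zero _)
  have hpre : (-Complex.I) ^ (n + 1) ≠ 0 := pow_ne_zero _ (neg_ne_zero.2 Complex.I_ne_zero)
  have hexp : Complex.exp (Complex.I * z) / z ≠ 0 :=
    div_ne_zero (Complex.exp_ne_zero _) hz
  exact mul_ne_zero (mul_ne_zero hpre hexp)
    (mul_ne_zero (div_ne_zero (mul_ne_zero hIn hf2n) (mul_ne_zero hfn h2zn)) hsum)

theorem zfun_deriv_div_sphHankel_asymptotic (z : ℂ) (hz : z ≠ 0) :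
    ∃ (N₀ : ℕ) (C : ℝ), 0 < C ∧ ∀ n : ℕ, N₀ ≤ n →
      sphHankel n z ≠ 0 ∧
      ‖z * deriv (zfun n) z / sphHankel n z - (n : ℂ) * ((n : ℂ) + 1) + z ^ 2‖ ≤ C / n := by
  obtain ⟨N₀, hN⟩ := eventually_sphHankel_ne z hz
  refine ⟨N₀, 1, one_pos, fun n hn => ?_⟩
  have hne := hN n hn
  refine ⟨hne, ?_⟩
  rw [key_identity_s7 n hz, mul_div_assoc, div_self hne, mul_one]
  have : (n : ℂ) * ((n : ℂ) + 1) - z ^ 2 - (n : ℂ) * ((n : ℂ) + 1) + z ^ 2 = 0 := by ring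
  rw [this, norm_zero]
  positivity
end

section
/- Let z ∈ ℂ with z ≠ 0. Then there exist N₀ ∈ ℕ and C > 0 such that for all integers n ≥ N₀ one has h_n^{(1)}(z) ≠ 0 and |h_{n−2}^{(1)}(z)/h_n^{(1)}(z)| ≤ C/n²; that is, h_{n−2}^{(1)}(z)/h_n^{(1)}(z) = O(1/n²) as n → ∞. -/
open Complex

open Filter Finset Topology

namespace SphAux

noncomputable def Mz (z : ℂ) (n : ℕ) : ℂ :=
  Complex.I ^ n * (Nat.factorial (2*n) : ℂ) / ((Nat.factorial n : ℂ) * (2*z) ^ n)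

noncomputable def g (z : ℂ) (n j : ℕ) : ℂ :=
  (-Complex.I * (2*z)) ^ j / (Nat.factorial j : ℂ) *
    ∏ m ∈ Finset.range j, (((n:ℂ) - m) / ((2*n:ℂ) - m))

noncomputable def fa (z : ℂ) (n j : ℕ) : ℂ := if j ≤ n then g z n j else 0

noncomputable def T (z : ℂ) (n : ℕ) : ℂ := ∑ j ∈ Finset.range (n+1), g z n j

lemma Mz_ne_zero (z : ℂ) (hz : z ≠ 0) (n : ℕ) : Mz z n ≠ 0 := by
  have h2z : (2*z) ≠ 0 := by simpa using hz
  apply div_ne_zero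
  · exact mul_ne_zero (pow_ne_zero _ Complex.I_ne_zero)
      (Nat.cast_ne_zero.mpr (Nat.factorial_ne_zero _))
  · exact mul_ne_zero (Nat.cast_ne_zero.mpr (Nat.factorial_ne_zero _)) (pow_ne_zero _ h2z)

lemma cast_prod_sub {N j : ℕ} (h : j ≤ N) :
    ((∏ m ∈ Finset.range j, (N - m) : ℕ) : ℂ) = ∏ m ∈ Finset.range j, ((N:ℂ) - m) := by
  rw [Nat.cast_prod]
  refine Finset.prod_congr rfl fun m hm => ?_
  have : m ≤ N := le_trans (le_of_lt (Finset.mem_range.mp hm)) h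
  push_cast [this]; ring

lemma fact_eq {N j : ℕ} (h : j ≤ N) :
    (Nat.factorial N : ℂ) = (Nat.factorial (N - j) : ℂ) * ∏ m ∈ Finset.range j, ((N:ℂ) - m) := by
  rw [← cast_prod_sub h, ← Nat.cast_mul, ← Nat.descFactorial_eq_prod_range,
    Nat.factorial_mul_descFactorial h]

lemma prod_sub_ne_zero {N j : ℕ} (h : j ≤ N) :
    (∏ m ∈ Finset.range j, ((N:ℂ) - m)) ≠ 0 := by
  rw [← cast_prod_sub h, Nat.cast_ne_zero]
  have : 0 < ∏ m ∈ Finset.range j, (N - m) := by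
    refine Finset.prod_pos fun m hm => ?_
    have := Finset.mem_range.mp hm; omega
  omega

lemma term_eq (z : ℂ) (hz : z ≠ 0) {n j : ℕ} (hj : j ≤ n) :
    (Complex.I ^ (n-j) / ((Nat.factorial (n-j) : ℂ) * (2 * z) ^ (n-j))) *
        ((Nat.factorial (n + (n-j)) : ℂ) / (Nat.factorial (n - (n-j)) : ℂ))
      = Mz z n * g z n j := by
  have h2z : (2*z) ≠ 0 := by simpa using hz
  have hkey1 : n + (n - j) = 2*n - j := by omega
  have hkey2 : n - (n - j) = j := by omega
  rw [hkey1, hkey2]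
  have hPn0 := prod_sub_ne_zero (N := n) hj
  have hPd0 := prod_sub_ne_zero (N := 2*n) (j := j) (by omega)
  unfold Mz g
  rw [Finset.prod_div_distrib, fact_eq hj, fact_eq (N := 2*n) (j := j) (by omega)]
  have hIn : Complex.I ^ n = Complex.I ^ (n-j) * Complex.I ^ j := by
    rw [← pow_add]; congr 1; omega
  have hzn : (2*z)^n = (2*z)^(n-j) * (2*z)^j := by
    rw [← pow_add]; congr 1; omega
  have hneg : (-Complex.I*(2*z))^j = (Complex.I^j)⁻¹ * (2*z)^j := by
    rw [mul_pow, ← inv_pow, Complex.inv_I]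
  rw [hIn, hzn, hneg]
  have hI0 : Complex.I ^ j ≠ 0 := pow_ne_zero _ Complex.I_ne_zero
  have hf1 : (Nat.factorial (n-j) : ℂ) ≠ 0 := Nat.cast_ne_zero.mpr (Nat.factorial_ne_zero _)
  have hf2 : (Nat.factorial (2*n-j) : ℂ) ≠ 0 := Nat.cast_ne_zero.mpr (Nat.factorial_ne_zero _)
  have hf3 : (Nat.factorial j : ℂ) ≠ 0 := Nat.cast_ne_zero.mpr (Nat.factorial_ne_zero _)
  have hp : (2*z)^(n-j) ≠ 0 := pow_ne_zero _ h2z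
  have hp2 : (2*z)^j ≠ 0 := pow_ne_zero _ h2z
  push_cast at hPd0 ⊢
  field_simp

lemma sum_eq (z : ℂ) (hz : z ≠ 0) (n : ℕ) :
    sphHankel n z = (-Complex.I) ^ (n + 1) * (Complex.exp (Complex.I * z) / z) *
      (Mz z n * T z n) := by
  have hs : (∑ k ∈ Finset.range (n + 1),
      (Complex.I ^ k / ((Nat.factorial k : ℂ) * (2 * z) ^ k)) *
        ((Nat.factorial (n + k) : ℂ) / (Nat.factorial (n - k) : ℂ)))
      = Mz z n * T z n := by
    rw [← Finset.sum_range_reflect (fun k =>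
      (Complex.I ^ k / ((Nat.factorial k : ℂ) * (2 * z) ^ k)) *
          ((Nat.factorial (n + k) : ℂ) / (Nat.factorial (n - k) : ℂ))) (n+1)]
    unfold T
    rw [Finset.mul_sum]
    refine Finset.sum_congr rfl fun j hj => ?_
    have hj' : j ≤ n := by have := Finset.mem_range.mp hj; omega
    have hidx : n + 1 - 1 - j = n - j := by omega
    simp only [hidx]
    exact term_eq z hz hj'
  unfold sphHankel
  rw [hs]

lemma norm_g_le (z : ℂ) {n j : ℕ} (hj : j ≤ n) :
    ‖g z n j‖ ≤ ‖z‖ ^ j / (Nat.factorial j : ℝ) := by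
  have h1 : ‖(-Complex.I * (2*z)) ^ j / (Nat.factorial j : ℂ)‖
      = (2*‖z‖)^j / (Nat.factorial j : ℝ) := by
    simp [norm_div, norm_mul, norm_pow, mul_comm]
  have h2 : ‖∏ m ∈ Finset.range j, (((n:ℂ) - m) / ((2*n:ℂ) - m))‖ ≤ (1/2 : ℝ)^j := by
    rw [norm_prod]
    calc ∏ m ∈ Finset.range j, ‖((n:ℂ) - m) / ((2*n:ℂ) - m)‖
        ≤ ∏ m ∈ Finset.range j, (1/2 : ℝ) := by
          refine Finset.prod_le_prod (fun m _ => norm_nonneg _) (fun m hm => ?_)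
          have hm' : m < j := Finset.mem_range.mp hm
          have e1 : ((n:ℂ) - m) = ((n - m : ℕ) : ℂ) := by
            have : m ≤ n := by omega
            push_cast [this]; ring
          have e2 : ((2*n:ℂ) - m) = ((2*n - m : ℕ) : ℂ) := by
            have : m ≤ 2*n := by omega
            push_cast [this]; ring
          rw [e1, e2, norm_div, Complex.norm_natCast, Complex.norm_natCast]
          rw [div_le_iff₀ (by exact_mod_cast Nat.cast_pos.mpr (show 0 < 2*n-m by omega))]
          have h3 : ((n-m:ℕ):ℝ) * 2 ≤ ((2*n-m:ℕ):ℝ) := by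
            exact_mod_cast (show (n-m)*2 ≤ 2*n-m by omega)
          linarith
      _ = (1/2 : ℝ)^j := by simp [Finset.prod_const]
  calc ‖g z n j‖ = (2*‖z‖)^j / (Nat.factorial j : ℝ) *
        ‖∏ m ∈ Finset.range j, (((n:ℂ) - m) / ((2*n:ℂ) - m))‖ := by
        unfold g; rw [norm_mul, h1]
    _ ≤ (2*‖z‖)^j / (Nat.factorial j : ℝ) * (1/2:ℝ)^j := by
        exact mul_le_mul_of_nonneg_left h2 (by positivity)
    _ = ‖z‖ ^ j / (Nat.factorial j : ℝ) := by
        rw [div_mul_eq_mul_div, ← mul_pow]; ring_nf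

lemma tendsto_inv_natCast_C : Tendsto (fun n : ℕ => ((n:ℂ))⁻¹) atTop (𝓝 0) := by
  have h := tendsto_inv_atTop_nhds_zero_nat (𝕜 := ℝ)
  have := (Complex.continuous_ofReal.tendsto (0:ℝ)).comp h
  refine this.congr fun n => ?_
  simp [Function.comp]

lemma tendsto_factor (m : ℕ) :
    Tendsto (fun n : ℕ => ((n:ℂ) - m) / ((2*n:ℂ) - m)) atTop (𝓝 (1/2)) := by
  have h := tendsto_inv_natCast_C
  have h1 : Tendsto (fun n : ℕ => (1 - (m:ℂ) * (n:ℂ)⁻¹) / (2 - (m:ℂ) * (n:ℂ)⁻¹))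
      atTop (𝓝 ((1 - (m:ℂ)*0) / (2 - (m:ℂ)*0))) := by
    apply Filter.Tendsto.div
    · exact tendsto_const_nhds.sub (tendsto_const_nhds.mul h)
    · exact tendsto_const_nhds.sub (tendsto_const_nhds.mul h)
    · norm_num
  simp only [mul_zero, sub_zero] at h1
  refine h1.congr' ?_
  filter_upwards [eventually_ge_atTop (m+1)] with n hn
  have hn0 : (n:ℂ) ≠ 0 := Nat.cast_ne_zero.mpr (by omega)
  have hd : (2*(n:ℂ) - m) ≠ 0 := by
    have : (2*(n:ℂ) - m) = ((2*n - m : ℕ) : ℂ) := by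
      push_cast [show m ≤ 2*n by omega]; ring
    rw [this]
    exact Nat.cast_ne_zero.mpr (by omega)
  field_simp

lemma tendsto_g (z : ℂ) (j : ℕ) :
    Tendsto (fun n : ℕ => g z n j) atTop
      (𝓝 ((-Complex.I * z) ^ j / (Nat.factorial j : ℂ))) := by
  have hprod : Tendsto (fun n : ℕ => ∏ m ∈ Finset.range j, (((n:ℂ) - m) / ((2*n:ℂ) - m)))
      atTop (𝓝 (∏ m ∈ Finset.range j, (1/2 : ℂ))) :=
    tendsto_finset_prod _ (fun m _ => tendsto_factor m)
  have h2 := tendsto_const_nhds.mul hprod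
    (f := fun _ : ℕ => (-Complex.I * (2*z)) ^ j / (Nat.factorial j : ℂ))
  have heq : ((-Complex.I * (2*z)) ^ j / (Nat.factorial j : ℂ)) * (∏ m ∈ Finset.range j, (1/2 : ℂ))
      = (-Complex.I * z) ^ j / (Nat.factorial j : ℂ) := by
    rw [Finset.prod_const, Finset.card_range, div_mul_eq_mul_div, ← mul_pow]
    ring_nf
  rw [← heq]
  exact h2.congr fun n => by rw [g]

lemma T_eq_tsum (z : ℂ) (n : ℕ) : T z n = ∑' j, fa z n j := by
  rw [tsum_eq_sum (s := Finset.range (n+1)) (f := fa z n)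
    (fun j hj => by
      simp only [fa, if_neg (show ¬ j ≤ n by
        intro h; exact hj (Finset.mem_range.mpr (by omega)))])]
  refine Finset.sum_congr rfl fun j hj => ?_
  simp only [fa, if_pos (show j ≤ n by have := Finset.mem_range.mp hj; omega)]

lemma tendsto_T (z : ℂ) :
    Tendsto (T z) atTop (𝓝 (Complex.exp (-Complex.I * z))) := by
  have hexp : Complex.exp (-Complex.I*z)
      = ∑' j, (-Complex.I*z)^j / (Nat.factorial j : ℂ) := by
    rw [Complex.exp_eq_exp_ℂ, NormedSpace.exp_eq_tsum_div]
  rw [hexp]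
  have h := tendsto_tsum_of_dominated_convergence (𝓕 := atTop) (f := fa z)
    (g := fun j => (-Complex.I*z)^j/(Nat.factorial j : ℂ))
    (bound := fun j => ‖z‖^j/(Nat.factorial j : ℝ))
    (Real.summable_pow_div_factorial ‖z‖)
    (fun j => by
      refine (tendsto_g z j).congr' ?_
      filter_upwards [eventually_ge_atTop j] with n hn
      simp only [fa, if_pos hn])
    (by
      filter_upwards with n j
      by_cases hj : j ≤ n
      · simp only [fa, if_pos hj]; exact norm_g_le z hj
      · simp only [fa, if_neg hj, norm_zero]; positivity)
  exact h.congr fun n => (T_eq_tsum z n).symm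

lemma norm_T_le (z : ℂ) (n : ℕ) :
    ‖T z n‖ ≤ ∑' j, ‖z‖^j / (Nat.factorial j : ℝ) := by
  calc ‖T z n‖ ≤ ∑ j ∈ Finset.range (n+1), ‖g z n j‖ := norm_sum_le _ _
    _ ≤ ∑ j ∈ Finset.range (n+1), ‖z‖^j / (Nat.factorial j : ℝ) := by
        refine Finset.sum_le_sum fun j hj => norm_g_le z ?_
        have := Finset.mem_range.mp hj; omega
    _ ≤ ∑' j, ‖z‖^j / (Nat.factorial j : ℝ) := by
        refine Summable.sum_le_tsum _ (fun j _ => by positivity)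
          (Real.summable_pow_div_factorial ‖z‖)

lemma norm_Mz (z : ℂ) (n : ℕ) :
    ‖Mz z n‖ = (Nat.factorial (2*n) : ℝ) / ((Nat.factorial n : ℝ) * (2*‖z‖) ^ n) := by
  unfold Mz
  rw [norm_div, norm_mul, norm_mul, norm_pow, norm_pow, Complex.norm_I, one_pow, one_mul,
    Complex.norm_natCast, Complex.norm_natCast, norm_mul]
  norm_num

lemma Mz_ratio (z : ℂ) (hz : z ≠ 0) (m : ℕ) :
    ‖Mz z (m+1)‖ * ((m:ℝ)+3)^2 ≤ ‖Mz z (m+3)‖ * ‖z‖^2 := by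
  have hzpos : (0:ℝ) < ‖z‖ := norm_pos_iff.mpr hz
  rw [norm_Mz, norm_Mz]
  have e1 : (2*(m+3)).factorial
      = (2*m+6)*((2*m+5)*((2*m+4)*((2*m+3)*(2*(m+1)).factorial))) := by
    rw [show 2*(m+3) = (2*m+5)+1 by ring, Nat.factorial_succ,
        show 2*m+5 = (2*m+4)+1 by ring, Nat.factorial_succ,
        show 2*m+4 = (2*m+3)+1 by ring, Nat.factorial_succ,
        show 2*m+3 = (2*m+2)+1 by ring, Nat.factorial_succ,
        show 2*m+2 = 2*(m+1) by ring]
    ring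
  have e2 : (m+3).factorial = (m+3)*((m+2)*(m+1).factorial) := by
    rw [show m+3 = (m+2)+1 by ring, Nat.factorial_succ,
        show m+2 = (m+1)+1 by ring, Nat.factorial_succ]
  have e3 : (2*‖z‖)^(m+3) = (2*‖z‖)^(m+1) * (4*‖z‖^2) := by
    rw [show m+3 = (m+1)+2 by ring, pow_add]; ring
  rw [e1, e2, e3]
  push_cast
  have hf1 : (0:ℝ) < ((m+1).factorial : ℝ) := by positivity
  have hf2 : (0:ℝ) < ((2*(m+1)).factorial : ℝ) := by positivity
  have hp : (0:ℝ) < (2*‖z‖)^(m+1) := by positivity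
  rw [div_mul_eq_mul_div, div_mul_eq_mul_div, div_le_div_iff₀ (by positivity) (by positivity)]
  have key : ((m:ℝ)+3)^2 * (((m:ℝ)+3)*((m:ℝ)+2)) * 4
      ≤ (2*(m:ℝ)+6)*((2*(m:ℝ)+5)*((2*(m:ℝ)+4)*(2*(m:ℝ)+3))) := by
    nlinarith [sq_nonneg ((m:ℝ)), sq_nonneg ((m:ℝ)+1), Nat.cast_nonneg (α := ℝ) m]
  have hc : (0:ℝ) ≤ ((2*(m+1)).factorial : ℝ) * ((m+1).factorial : ℝ) * (2*‖z‖)^(m+1) * ‖z‖^2 := by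
    positivity
  nlinarith [mul_le_mul_of_nonneg_left key hc]

end SphAux

theorem sphHankel_two_step_ratio_asymptotic (z : ℂ) (hz : z ≠ 0) :
    ∃ (N₀ : ℕ) (C : ℝ), 0 < C ∧ ∀ n : ℕ, N₀ ≤ n →
      sphHankel n z ≠ 0 ∧
      ‖sphHankel (n - 2) z / sphHankel n z‖ ≤ C / (n : ℝ) ^ 2 := by
  open SphAux in
  have hT := SphAux.tendsto_T z
  set L := ‖Complex.exp (-Complex.I * z)‖ with hLdef
  have hLpos : 0 < L := norm_pos_iff.mpr (Complex.exp_ne_zero _)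
  have hev : ∀ᶠ n in atTop, L/2 ≤ ‖SphAux.T z n‖ :=
    (hT.norm).eventually (eventually_ge_nhds (by linarith))
  obtain ⟨N₁, hN₁⟩ := eventually_atTop.mp hev
  set B := ∑' j, ‖z‖^j / (Nat.factorial j : ℝ) with hBdef
  have hBpos : (0:ℝ) < B := by
    have h1 : (1:ℝ) ≤ B := by
      have h := Summable.sum_le_tsum (Finset.range 1) (fun j _ => by positivity)
        (Real.summable_pow_div_factorial ‖z‖)
      simpa using h
    linarith
  have hzpos : 0 < ‖z‖ := norm_pos_iff.mpr hz
  refine ⟨max N₁ 3, 2*B*‖z‖^2/L, by positivity, fun n hn => ?_⟩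
  have hn3 : 3 ≤ n := le_trans (le_max_right _ _) hn
  have hn1 : N₁ ≤ n := le_trans (le_max_left _ _) hn
  obtain ⟨m, rfl⟩ : ∃ m, n = m + 3 := ⟨n - 3, by omega⟩
  have hTn : L/2 ≤ ‖SphAux.T z (m+3)‖ := hN₁ _ hn1
  have hTnpos : 0 < ‖SphAux.T z (m+3)‖ := lt_of_lt_of_le (by linarith) hTn
  have hTn0 : SphAux.T z (m+3) ≠ 0 := norm_pos_iff.mp hTnpos
  have hE : Complex.exp (Complex.I*z)/z ≠ 0 := div_ne_zero (Complex.exp_ne_zero _) hz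
  have hne : sphHankel (m+3) z ≠ 0 := by
    rw [SphAux.sum_eq z hz]
    exact mul_ne_zero (mul_ne_zero (pow_ne_zero _ (neg_ne_zero.mpr Complex.I_ne_zero)) hE)
      (mul_ne_zero (SphAux.Mz_ne_zero z hz _) hTn0)
  refine ⟨hne, ?_⟩
  have hidx : m + 3 - 2 = m + 1 := by omega
  rw [hidx, norm_div, SphAux.sum_eq z hz (m+1), SphAux.sum_eq z hz (m+3)]
  simp only [norm_mul, norm_pow, norm_neg, Complex.norm_I, one_pow, one_mul]
  set E := ‖Complex.exp (Complex.I*z)/z‖ with hEdef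
  have hEpos : 0 < E := norm_pos_iff.mpr hE
  have hM3 : 0 < ‖SphAux.Mz z (m+3)‖ := norm_pos_iff.mpr (SphAux.Mz_ne_zero z hz _)
  rw [mul_div_mul_left _ _ (ne_of_gt hEpos)]
  have hTu : ‖SphAux.T z (m+1)‖ ≤ B := SphAux.norm_T_le z (m+1)
  have hMr := SphAux.Mz_ratio z hz m
  have hMbound : ‖SphAux.Mz z (m+1)‖ ≤ ‖SphAux.Mz z (m+3)‖ * ‖z‖^2 / ((m:ℝ)+3)^2 :=
    (le_div_iff₀ (by positivity)).mpr hMr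
  have hcast : ((m+3:ℕ):ℝ) = (m:ℝ)+3 := by push_cast; ring
  rw [hcast]
  calc ‖SphAux.Mz z (m+1)‖ * ‖SphAux.T z (m+1)‖ /
        (‖SphAux.Mz z (m+3)‖ * ‖SphAux.T z (m+3)‖)
      ≤ (‖SphAux.Mz z (m+3)‖ * ‖z‖^2 / ((m:ℝ)+3)^2 * B) /
        (‖SphAux.Mz z (m+3)‖ * (L/2)) := by
        refine div_le_div₀ (by positivity)
          (mul_le_mul hMbound hTu (norm_nonneg _) (by positivity))
          (by positivity)
          (mul_le_mul_of_nonneg_left hTn (le_of_lt hM3))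
    _ = 2*B*‖z‖^2/L/((m:ℝ)+3)^2 := by
        rw [div_eq_div_iff (by positivity) (by positivity)]
        field_simp
end

section
/- Let κ₀ ∈ ℂ with κ₀ ≠ 0 and let R > 0. Then there exist N₀ ∈ ℕ and C > 0 such that for every integer n ≥ N₀: h_n^{(1)}(κ₀R) ≠ 0, the function κ ↦ z_n^{(1)}(κR)/(κ·h_n^{(1)}(κR)) is complex differentiable at κ₀, and its derivative F_n′(κ₀) satisfies |F_n′(κ₀) − n/κ₀²| ≤ C/n; that is, (z_n^{(1)}(κR)/(κ·h_n^{(1)}(κR)))′ evaluated at κ₀ equals n/κ₀² + O(1/n) as n → ∞. -/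
open Complex

open Finset

namespace DtnAux


noncomputable def dd (n j : ℕ) : ℂ :=
  (-I)^j * 2^j * ((Nat.factorial n : ℂ) * (Nat.factorial (2*n - j) : ℂ)) /
    ((Nat.factorial j : ℂ) * (Nat.factorial (n - j) : ℂ) * (Nat.factorial (2*n) : ℂ))

noncomputable def QQ (n : ℕ) (z : ℂ) : ℂ := ∑ j ∈ range (n+1), dd n j * z^j
noncomputable def QQ₁ (n : ℕ) (z : ℂ) : ℂ := ∑ j ∈ range (n+1), dd n j * (j * z^(j-1))
noncomputable def AA (n : ℕ) (z : ℂ) : ℂ :=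
  ∑ j ∈ range (n+1), ((j:ℂ)/((2*n - j : ℕ):ℂ)) * dd n j * z^j
noncomputable def AA₁ (n : ℕ) (z : ℂ) : ℂ :=
  ∑ j ∈ range (n+1), ((j:ℂ)/((2*n - j : ℕ):ℂ)) * dd n j * (j * z^(j-1))
noncomputable def KK (n : ℕ) : ℂ :=
  (-I)^(n+1) * (I^n * (Nat.factorial (2*n) : ℂ) / ((Nat.factorial n : ℂ) * 2^n))

lemma hasDerivAt_QQ (n : ℕ) (z : ℂ) : HasDerivAt (fun w => QQ n w) (QQ₁ n z) z := by
  unfold QQ QQ₁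
  refine HasDerivAt.fun_sum fun j _ => ?_
  simpa using (hasDerivAt_pow j z).const_mul (dd n j)

lemma hasDerivAt_AA (n : ℕ) (z : ℂ) : HasDerivAt (fun w => AA n w) (AA₁ n z) z := by
  unfold AA AA₁
  refine HasDerivAt.fun_sum fun j _ => ?_
  simpa using (hasDerivAt_pow j z).const_mul (((j:ℂ)/((2*n - j : ℕ):ℂ)) * dd n j)

lemma dd_zero (n : ℕ) : dd n 0 = 1 := by
  have h1 : (Nat.factorial n : ℂ) ≠ 0 := Nat.cast_ne_zero.mpr (Nat.factorial_ne_zero n)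
  have h2 : (Nat.factorial (2*n) : ℂ) ≠ 0 := Nat.cast_ne_zero.mpr (Nat.factorial_ne_zero _)
  simp [dd]
  exact ⟨Nat.factorial_ne_zero _, Nat.factorial_ne_zero _⟩

lemma QQ_zero (n : ℕ) : QQ n 0 = 1 := by
  rw [QQ, Finset.sum_eq_single 0]
  · simp [dd_zero]
  · intro j _ hj; simp [zero_pow hj]
  · simp

lemma KK_ne_zero (n : ℕ) : KK n ≠ 0 := by
  have h1 : (Nat.factorial n : ℂ) ≠ 0 := Nat.cast_ne_zero.mpr (Nat.factorial_ne_zero n)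
  have h2 : (Nat.factorial (2*n) : ℂ) ≠ 0 := Nat.cast_ne_zero.mpr (Nat.factorial_ne_zero _)
  apply mul_ne_zero (pow_ne_zero _ (neg_ne_zero.mpr I_ne_zero))
  apply div_ne_zero (mul_ne_zero (pow_ne_zero _ I_ne_zero) h2)
  exact mul_ne_zero h1 (pow_ne_zero _ two_ne_zero)


lemma hf (m : ℕ) : (Nat.factorial m : ℂ) ≠ 0 := Nat.cast_ne_zero.mpr (Nat.factorial_ne_zero m)

lemma dd_mul {n j : ℕ} (hj : j < n) :
    dd n (j+1) * (((j:ℂ)+1) * ((2*n - j : ℕ):ℂ)) = dd n j * ((-I) * 2 * ((n - j : ℕ):ℂ)) := by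
  obtain ⟨a, rfl⟩ : ∃ a, n = j + 1 + a := ⟨n - (j+1), by omega⟩
  have e1 : 2*(j+1+a) - (j+1) = j+1+2*a := by omega
  have e3 : 2*(j+1+a) - j = (j+1+2*a) + 1 := by omega
  have e2 : (j+1+a) - (j+1) = a := by omega
  have e4 : (j+1+a) - j = a + 1 := by omega
  rw [dd, dd, e1, e2, e3, e4]
  generalize hg6 : (Nat.factorial (2*(j+1+a)) : ℂ) = g6
  generalize hg5 : (Nat.factorial (j+1+a) : ℂ) = g5
  have r1 : (Nat.factorial (j+1+2*a+1) : ℂ) = ((j:ℂ)+2*a+2) * (Nat.factorial (j+1+2*a) : ℂ) := by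
    rw [Nat.factorial_succ]; push_cast; ring
  have r2 : (Nat.factorial (j+1) : ℂ) = ((j:ℂ)+1) * (Nat.factorial j : ℂ) := by
    rw [Nat.factorial_succ]; push_cast; ring
  have r3 : (Nat.factorial (a+1) : ℂ) = ((a:ℂ)+1) * (Nat.factorial a : ℂ) := by
    rw [Nat.factorial_succ]; push_cast; ring
  rw [r1, r2, r3]
  generalize hg1 : (Nat.factorial j : ℂ) = g1
  generalize hg2 : (Nat.factorial a : ℂ) = g2
  generalize hg3 : (Nat.factorial (j+1+2*a) : ℂ) = g3
  have n1 : g1 ≠ 0 := hg1 ▸ hf j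
  have n2 : g2 ≠ 0 := hg2 ▸ hf a
  have n3 : g3 ≠ 0 := hg3 ▸ hf _
  have n6 : g6 ≠ 0 := hg6 ▸ hf _
  have h6 : ((j:ℂ)+1) ≠ 0 := Nat.cast_add_one_ne_zero j
  have h7 : ((a:ℂ)+1) ≠ 0 := Nat.cast_add_one_ne_zero a
  push_cast
  field_simp
  ring

lemma key (n : ℕ) (hn : 1 ≤ n) (z : ℂ) : QQ₁ n z + I * QQ n z = I * AA n z := by
  rw [QQ₁, QQ, AA, mul_sum, mul_sum]
  rw [Finset.sum_range_succ' (fun j => dd n j * (j * z^(j-1))) n]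
  rw [Finset.sum_range_succ (fun j => I * (dd n j * z^j)) n]
  rw [Finset.sum_range_succ (fun j => I * ((j:ℂ)/((2*n - j : ℕ):ℂ) * dd n j * z^j)) n]
  have htop : I * ((n:ℂ)/((2*n - n : ℕ):ℂ) * dd n n * z^n) = I * (dd n n * z^n) := by
    have : 2*n - n = n := by omega
    rw [this, div_self (Nat.cast_ne_zero.mpr (by omega : n ≠ 0)), one_mul]
  rw [htop]
  have hterm : ∀ i ∈ range n,
      dd n (i+1) * (((i+1:ℕ):ℂ) * z^(i+1-1)) + I * (dd n i * z^i)
        = I * ((i:ℂ)/((2*n - i : ℕ):ℂ) * dd n i * z^i) := by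
    intro i hi
    have hi' : i < n := Finset.mem_range.mp hi
    have hm : ((2*n - i : ℕ):ℂ) ≠ 0 := Nat.cast_ne_zero.mpr (by omega)
    have hmm : ((2*n - i : ℕ):ℂ) = (i:ℂ) + 2*((n - i : ℕ):ℂ) := by
      have : 2*n - i = i + 2*(n-i) := by omega
      rw [this]; push_cast; ring
    have hd := dd_mul hi'
    simp only [Nat.add_sub_cancel]
    push_cast
    field_simp
    linear_combination z^i * hd + I * dd n i * z^i * hmm
  calc (∑ i ∈ range n, dd n (i+1) * (((i+1:ℕ):ℂ) * z^(i+1-1)) + dd n 0 * ((0:ℕ) * z^(0-1)))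
        + (∑ j ∈ range n, I * (dd n j * z^j) + I * (dd n n * z^n))
      = (∑ i ∈ range n, (dd n (i+1) * (((i+1:ℕ):ℂ) * z^(i+1-1)) + I * (dd n i * z^i)))
        + I * (dd n n * z^n) := by
        rw [Finset.sum_add_distrib]; push_cast; ring
    _ = (∑ i ∈ range n, I * ((i:ℂ)/((2*n - i : ℕ):ℂ) * dd n i * z^i)) + I * (dd n n * z^n) := by
        rw [Finset.sum_congr rfl hterm]

lemma sphHankel_eq (n : ℕ) {z : ℂ} (hz : z ≠ 0) :
    sphHankel n z = KK n * Complex.exp (I * z) * QQ n z / z^(n+1) := by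
  have hsum : ∑ k ∈ Finset.range (n + 1),
      (Complex.I ^ k / ((Nat.factorial k : ℂ) * (2 * z) ^ k)) *
        ((Nat.factorial (n + k) : ℂ) / (Nat.factorial (n - k) : ℂ))
      = (I^n * (Nat.factorial (2*n) : ℂ) / ((Nat.factorial n : ℂ) * 2^n)) * QQ n z / z^n := by
    rw [QQ, Finset.mul_sum, Finset.sum_div]
    rw [← Finset.sum_range_reflect]
    refine Finset.sum_congr rfl fun j hj => ?_
    have hj' : j ≤ n := by have := Finset.mem_range.mp hj; omega
    obtain ⟨b, rfl⟩ : ∃ b, n = j + b := ⟨n - j, by omega⟩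
    have e0 : j + b + 1 - 1 - j = b := by omega
    have e1 : j + b + b = j + 2*b := by omega
    have e2 : j + b - b = j := by omega
    have e3 : 2*(j+b) - j = j + 2*b := by omega
    have e4 : (j+b) - j = b := by omega
    rw [e0, dd, e1, e2, e3, e4]
    have hI : (-I:ℂ)^j * I^(j+b) = I^b := by
      rw [pow_add, ← mul_assoc, ← mul_pow]
      norm_num
    rw [mul_pow 2 z b, pow_add 2 j b, pow_add z j b]
    generalize hg1 : (Nat.factorial (j+2*b) : ℂ) = g1
    generalize hg2 : (Nat.factorial j : ℂ) = g2
    generalize hg3 : (Nat.factorial b : ℂ) = g3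
    generalize hg4 : (Nat.factorial (j+b) : ℂ) = g4
    generalize hg5 : (Nat.factorial (2*(j+b)) : ℂ) = g5
    have n1 : g1 ≠ 0 := hg1 ▸ hf _
    have n2 : g2 ≠ 0 := hg2 ▸ hf _
    have n3 : g3 ≠ 0 := hg3 ▸ hf _
    have n4 : g4 ≠ 0 := hg4 ▸ hf _
    have n5 : g5 ≠ 0 := hg5 ▸ hf _
    field_simp
    have hzb : z^b ≠ 0 := pow_ne_zero _ hz
    have hzj2 : z^j ≠ 0 := pow_ne_zero _ hz
    have h2b : (2:ℂ)^b ≠ 0 := pow_ne_zero _ two_ne_zero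
    have h2j2 : (2:ℂ)^j ≠ 0 := pow_ne_zero _ two_ne_zero
    linear_combination -hI
  rw [sphHankel, hsum, KK]
  generalize (Complex.exp (I*z)) = Ez
  generalize (QQ n z) = Qz
  have hgn : (Nat.factorial n : ℂ) ≠ 0 := hf n
  have h2n : ((2:ℂ))^n ≠ 0 := pow_ne_zero _ two_ne_zero
  have hzn : z^n ≠ 0 := pow_ne_zero _ hz
  rw [pow_succ z n]
  field_simp

lemma nat_ineq : ∀ j b : ℕ, 2^j * (Nat.factorial (j+b) * Nat.factorial (j+2*b))
    ≤ Nat.factorial b * Nat.factorial (2*(j+b)) := by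
  intro j
  induction j with
  | zero => intro b; simp [two_mul, Nat.factorial]
    
  | succ j ih =>
    intro b
    have inst := ih (b+1)
    -- target: 2^(j+1) * ((j+1+b)! * (j+1+2b)!) ≤ b! * (2*(j+1+b))!
    have cancel : (b+1) * (2^(j+1) * (Nat.factorial (j+1+b) * Nat.factorial (j+1+2*b)))
        ≤ (b+1) * (Nat.factorial b * Nat.factorial (2*(j+1+b))) := by
      have e1 : j + (b+1) = j+1+b := by omega
      have e2 : j + 2*(b+1) = (j+1+2*b) + 1 := by omega
      rw [e1, e2, Nat.factorial_succ (j+1+2*b)] at inst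
      calc (b+1) * (2^(j+1) * (Nat.factorial (j+1+b) * Nat.factorial (j+1+2*b)))
          ≤ (j+2*b+2) * (2^j * (Nat.factorial (j+1+b) * Nat.factorial (j+1+2*b))) := by
            have h1 : (b+1) * 2 ≤ j+2*b+2 := by omega
            calc (b+1) * (2^(j+1) * (Nat.factorial (j+1+b) * Nat.factorial (j+1+2*b)))
                = ((b+1)*2) * (2^j * (Nat.factorial (j+1+b) * Nat.factorial (j+1+2*b))) := by
                  ring
              _ ≤ (j+2*b+2) * (2^j * (Nat.factorial (j+1+b) * Nat.factorial (j+1+2*b))) :=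
                  Nat.mul_le_mul_right _ h1
        _ = 2^j * (Nat.factorial (j+1+b) * ((j+1+2*b+1) * Nat.factorial (j+1+2*b))) := by ring
        _ ≤ Nat.factorial (b+1) * Nat.factorial (2*(j+1+b)) := inst
        _ = (b+1) * (Nat.factorial b * Nat.factorial (2*(j+1+b))) := by
            rw [Nat.factorial_succ]; ring
    exact Nat.le_of_mul_le_mul_left cancel (by omega)

lemma norm_dd_le {n j : ℕ} (hj : j ≤ n) : ‖dd n j‖ ≤ 1 / (Nat.factorial j : ℝ) := by
  obtain ⟨b, rfl⟩ : ∃ b, n = j + b := ⟨n - j, by omega⟩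
  have e3 : 2*(j+b) - j = j + 2*b := by omega
  have e4 : (j+b) - j = b := by omega
  rw [dd, e3, e4]
  rw [norm_div]
  simp only [norm_mul, norm_pow, norm_neg, Complex.norm_I, one_pow, one_mul,
    Complex.norm_natCast, Complex.norm_ofNat]
  have hpos : (0:ℝ) < (Nat.factorial j : ℝ) * (Nat.factorial b : ℝ) * (Nat.factorial (2*(j+b)) : ℝ) := by
    positivity
  rw [div_le_div_iff₀ hpos (by positivity)]
  have := nat_ineq j b
  calc 2^j * ((Nat.factorial (j+b) : ℝ) * (Nat.factorial (j+2*b) : ℝ)) * (Nat.factorial j : ℝ)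
      = (Nat.factorial j : ℝ) * ((2^j * (Nat.factorial (j+b) * Nat.factorial (j+2*b)) : ℕ) : ℝ) := by
        push_cast; ring
    _ ≤ (Nat.factorial j : ℝ) * ((Nat.factorial b * Nat.factorial (2*(j+b)) : ℕ) : ℝ) :=
        mul_le_mul_of_nonneg_left (Nat.cast_le.mpr this) (by positivity)
    _ = 1 * ((Nat.factorial j : ℝ) * (Nat.factorial b : ℝ) * (Nat.factorial (2*(j+b)) : ℝ)) := by
        push_cast; ring

lemma helper0 {r : ℝ} (hr : 0 ≤ r) (m : ℕ) :
    ∑ j ∈ range m, r^j / (Nat.factorial j : ℝ) ≤ Real.exp r :=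
  Real.sum_le_exp_of_nonneg hr m

lemma helper1 {r : ℝ} (hr : 0 ≤ r) (m : ℕ) :
    ∑ j ∈ range m, (j:ℝ) * r^j / (Nat.factorial j : ℝ) ≤ r * Real.exp r := by
  cases m with
  | zero => simp; positivity
  | succ m =>
    rw [Finset.sum_range_succ' (fun j => (j:ℝ) * r^j / (Nat.factorial j : ℝ)) m]
    simp only [Nat.cast_zero, zero_mul, zero_div, add_zero]
    have : ∀ i ∈ range m, ((i+1:ℕ):ℝ) * r^(i+1) / (Nat.factorial (i+1) : ℝ)
        = r * (r^i / (Nat.factorial i : ℝ)) := by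
      intro i _
      rw [Nat.factorial_succ]
      push_cast
      rw [pow_succ]
      have h1 : (Nat.factorial i : ℝ) ≠ 0 := Nat.cast_ne_zero.mpr (Nat.factorial_ne_zero i)
      have h2 : ((i:ℝ)+1) ≠ 0 := by positivity
      field_simp
    rw [Finset.sum_congr rfl this, ← Finset.mul_sum]
    exact mul_le_mul_of_nonneg_left (helper0 hr m) hr

lemma helper2 {r : ℝ} (hr : 0 ≤ r) (m : ℕ) :
    ∑ j ∈ range m, (j:ℝ)^2 * r^(j-1) / (Nat.factorial j : ℝ) ≤ (1+r) * Real.exp r := by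
  cases m with
  | zero => simp; positivity
  | succ m =>
    rw [Finset.sum_range_succ' (fun j => (j:ℝ)^2 * r^(j-1) / (Nat.factorial j : ℝ)) m]
    simp only [Nat.cast_zero, ne_eq, OfNat.ofNat_ne_zero, not_false_eq_true, zero_pow, zero_mul,
      zero_div, add_zero]
    have : ∀ i ∈ range m, ((i+1:ℕ):ℝ)^2 * r^(i+1-1) / (Nat.factorial (i+1) : ℝ)
        = (i:ℝ) * r^i / (Nat.factorial i : ℝ) + r^i / (Nat.factorial i : ℝ) := by
      intro i _
      rw [Nat.factorial_succ]
      push_cast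
      have h1 : (Nat.factorial i : ℝ) ≠ 0 := Nat.cast_ne_zero.mpr (Nat.factorial_ne_zero i)
      have h2 : ((i:ℝ)+1) ≠ 0 := by positivity
      field_simp
    rw [Finset.sum_congr rfl this, Finset.sum_add_distrib]
    calc (∑ i ∈ range m, (i:ℝ) * r^i / (Nat.factorial i : ℝ))
          + ∑ i ∈ range m, r^i / (Nat.factorial i : ℝ)
        ≤ r * Real.exp r + Real.exp r := add_le_add (helper1 hr m) (helper0 hr m)
      _ = (1+r) * Real.exp r := by ring

lemma norm_QQ_le (n : ℕ) {w : ℂ} {r : ℝ} (hw : ‖w‖ ≤ r) : ‖QQ n w‖ ≤ Real.exp r := by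
  have hr : 0 ≤ r := le_trans (norm_nonneg _) hw
  calc ‖QQ n w‖ ≤ ∑ j ∈ range (n+1), ‖dd n j * w^j‖ := norm_sum_le _ _
    _ ≤ ∑ j ∈ range (n+1), r^j / (Nat.factorial j : ℝ) := by
        refine Finset.sum_le_sum fun j hj => ?_
        have hj' : j ≤ n := by have := Finset.mem_range.mp hj; omega
        rw [norm_mul, norm_pow]
        calc ‖dd n j‖ * ‖w‖^j ≤ (1/(Nat.factorial j : ℝ)) * r^j := by
              apply mul_le_mul (norm_dd_le hj') (pow_le_pow_left₀ (norm_nonneg _) hw j)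
                (by positivity) (by positivity)
          _ = r^j / (Nat.factorial j : ℝ) := by ring
    _ ≤ Real.exp r := helper0 hr _

lemma coef_le {n j : ℕ} (hn : 1 ≤ n) (hj : j ≤ n) :
    ‖((j:ℂ)/((2*n - j : ℕ):ℂ)) * dd n j‖ ≤ ((j:ℝ)/n) * (1/(Nat.factorial j : ℝ)) := by
  rw [norm_mul, norm_div, Complex.norm_natCast, Complex.norm_natCast]
  apply mul_le_mul _ (norm_dd_le hj) (norm_nonneg _) (by positivity)
  rcases Nat.eq_zero_or_pos j with rfl | hjpos
  · simp
  · apply div_le_div_of_nonneg_left (by positivity) (by positivity)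
    exact_mod_cast (by omega : n ≤ 2*n - j)

lemma norm_AA_le {n : ℕ} (hn : 1 ≤ n) {w : ℂ} {r : ℝ} (hw : ‖w‖ ≤ r) :
    ‖AA n w‖ ≤ r * Real.exp r / n := by
  have hr : 0 ≤ r := le_trans (norm_nonneg _) hw
  calc ‖AA n w‖ ≤ ∑ j ∈ range (n+1), ‖((j:ℂ)/((2*n - j : ℕ):ℂ)) * dd n j * w^j‖ := norm_sum_le _ _
    _ ≤ ∑ j ∈ range (n+1), (1/(n:ℝ)) * ((j:ℝ) * r^j / (Nat.factorial j : ℝ)) := by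
        refine Finset.sum_le_sum fun j hj => ?_
        have hj' : j ≤ n := by have := Finset.mem_range.mp hj; omega
        rw [norm_mul, norm_pow]
        calc ‖((j:ℂ)/((2*n - j : ℕ):ℂ)) * dd n j‖ * ‖w‖^j
            ≤ (((j:ℝ)/n) * (1/(Nat.factorial j : ℝ))) * r^j := by
              apply mul_le_mul (coef_le hn hj') (pow_le_pow_left₀ (norm_nonneg _) hw j)
                (by positivity) (by positivity)
          _ = (1/(n:ℝ)) * ((j:ℝ) * r^j / (Nat.factorial j : ℝ)) := by ring
    _ = (1/(n:ℝ)) * ∑ j ∈ range (n+1), (j:ℝ) * r^j / (Nat.factorial j : ℝ) := by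
        rw [Finset.mul_sum]
    _ ≤ (1/(n:ℝ)) * (r * Real.exp r) := by
        apply mul_le_mul_of_nonneg_left (helper1 hr _) (by positivity)
    _ = r * Real.exp r / n := by ring

lemma norm_AA₁_le {n : ℕ} (hn : 1 ≤ n) {w : ℂ} {r : ℝ} (hw : ‖w‖ ≤ r) :
    ‖AA₁ n w‖ ≤ (1+r) * Real.exp r / n := by
  have hr : 0 ≤ r := le_trans (norm_nonneg _) hw
  calc ‖AA₁ n w‖ ≤ ∑ j ∈ range (n+1), ‖((j:ℂ)/((2*n - j : ℕ):ℂ)) * dd n j * ((j:ℂ) * w^(j-1))‖ :=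
        norm_sum_le _ _
    _ ≤ ∑ j ∈ range (n+1), (1/(n:ℝ)) * ((j:ℝ)^2 * r^(j-1) / (Nat.factorial j : ℝ)) := by
        refine Finset.sum_le_sum fun j hj => ?_
        have hj' : j ≤ n := by have := Finset.mem_range.mp hj; omega
        simp only [norm_mul, norm_pow, Complex.norm_natCast]
        have hc := coef_le hn hj'
        rw [norm_mul] at hc
        calc ‖(j:ℂ)/((2*n - j : ℕ):ℂ)‖ * ‖dd n j‖ * ((j:ℝ) * ‖w‖^(j-1))
            ≤ (((j:ℝ)/n) * (1/(Nat.factorial j : ℝ))) * ((j:ℝ) * r^(j-1)) := by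
              apply mul_le_mul hc
                (mul_le_mul_of_nonneg_left (pow_le_pow_left₀ (norm_nonneg _) hw _) (by positivity))
                (by positivity) (by positivity)
          _ = (1/(n:ℝ)) * ((j:ℝ)^2 * r^(j-1) / (Nat.factorial j : ℝ)) := by ring
    _ = (1/(n:ℝ)) * ∑ j ∈ range (n+1), (j:ℝ)^2 * r^(j-1) / (Nat.factorial j : ℝ) := by
        rw [Finset.mul_sum]
    _ ≤ (1/(n:ℝ)) * ((1+r) * Real.exp r) := by
        apply mul_le_mul_of_nonneg_left (helper2 hr _) (by positivity)
    _ = (1+r) * Real.exp r / n := by ring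

lemma norm_QQ₁_le {n : ℕ} (hn : 1 ≤ n) {w : ℂ} {r : ℝ} (hw : ‖w‖ ≤ r) :
    ‖QQ₁ n w‖ ≤ (1+r) * Real.exp r := by
  have hr : 0 ≤ r := le_trans (norm_nonneg _) hw
  have h : QQ₁ n w = I * AA n w - I * QQ n w := by
    have := key n hn w
    linear_combination this
  rw [h]
  calc ‖I * AA n w - I * QQ n w‖ ≤ ‖I * AA n w‖ + ‖I * QQ n w‖ := norm_sub_le _ _
    _ = ‖AA n w‖ + ‖QQ n w‖ := by rw [norm_mul, norm_mul, Complex.norm_I, one_mul, one_mul]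
    _ ≤ r * Real.exp r / n + Real.exp r := add_le_add (norm_AA_le hn hw) (norm_QQ_le n hw)
    _ ≤ r * Real.exp r + Real.exp r := by
        apply add_le_add_left
        apply div_le_self (by positivity)
        exact_mod_cast hn
    _ = (1+r) * Real.exp r := by ring


lemma hasDerivAt_E (n : ℕ) (hn : 1 ≤ n) (z : ℂ) :
    HasDerivAt (fun w => Complex.exp (I*w) * QQ n w) (Complex.exp (I*z) * (I * AA n z)) z := by
  have h1 : HasDerivAt (fun w : ℂ => Complex.exp (I*w)) (Complex.exp (I*z) * I) z := by
    simpa using ((hasDerivAt_id z).const_mul I).cexp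
  have h2 := (h1.mul (hasDerivAt_QQ n z))
  have : Complex.exp (I*z) * I * QQ n z + Complex.exp (I*z) * QQ₁ n z
      = Complex.exp (I*z) * (I * AA n z) := by
    have := key n hn z
    linear_combination Complex.exp (I*z) * this
  rwa [this] at h2

lemma norm_exp_I_le {z : ℂ} {r : ℝ} (hz : ‖z‖ ≤ r) : ‖Complex.exp (I*z)‖ ≤ Real.exp r := by
  rw [Complex.norm_exp]
  apply Real.exp_le_exp.mpr
  have h1 : (I*z).re = -z.im := by simp
  rw [h1]
  have := Complex.abs_im_le_norm z
  cases abs_le.mp (le_trans this hz) with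
  | intro a b => linarith [abs_le.mp (le_trans (Complex.abs_im_le_norm z) hz)]

lemma norm_E_sub_one {n : ℕ} (hn : 1 ≤ n) {w : ℂ} {r : ℝ} (hw : ‖w‖ ≤ r) :
    ‖Complex.exp (I*w) * QQ n w - 1‖ ≤ r^2 * Real.exp (2*r) / n := by
  have hr : 0 ≤ r := le_trans (norm_nonneg _) hw
  have hball : Convex ℝ (Metric.closedBall (0:ℂ) r) := convex_closedBall _ _
  have hder : ∀ z ∈ Metric.closedBall (0:ℂ) r,
      HasDerivWithinAt (fun w => Complex.exp (I*w) * QQ n w)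
        (Complex.exp (I*z) * (I * AA n z)) (Metric.closedBall (0:ℂ) r) z :=
    fun z _ => (hasDerivAt_E n hn z).hasDerivWithinAt
  have hbound : ∀ z ∈ Metric.closedBall (0:ℂ) r,
      ‖Complex.exp (I*z) * (I * AA n z)‖ ≤ Real.exp r * (r * Real.exp r / n) := by
    intro z hz
    rw [Metric.mem_closedBall, dist_zero_right] at hz
    rw [norm_mul, norm_mul, Complex.norm_I, one_mul]
    exact mul_le_mul (norm_exp_I_le hz) (norm_AA_le hn hz) (norm_nonneg _) (Real.exp_nonneg _)
  have h0 : (0:ℂ) ∈ Metric.closedBall (0:ℂ) r := by simp [hr]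
  have hwmem : w ∈ Metric.closedBall (0:ℂ) r := by simpa [Metric.mem_closedBall, dist_zero_right]
  have := hball.norm_image_sub_le_of_norm_hasDerivWithin_le hder hbound h0 hwmem
  simp only [mul_zero, Complex.exp_zero, QQ_zero, mul_one, sub_zero] at this
  calc ‖Complex.exp (I*w) * QQ n w - 1‖ ≤ Real.exp r * (r * Real.exp r / n) * ‖w‖ := this
    _ ≤ Real.exp r * (r * Real.exp r / n) * r := by
        apply mul_le_mul_of_nonneg_left hw (by positivity)
    _ = r^2 * (Real.exp r * Real.exp r) / n := by ring
    _ = r^2 * Real.exp (2*r) / n := by rw [← Real.exp_add]; ring_nf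

lemma QQ_lower {n : ℕ} (hn : 1 ≤ n) {w : ℂ} {r : ℝ} (hw : ‖w‖ ≤ r)
    (hbig : r^2 * Real.exp (2*r) / n ≤ 1/2) : 1/(2*Real.exp r) ≤ ‖QQ n w‖ := by
  have hr : 0 ≤ r := le_trans (norm_nonneg _) hw
  have h2 := norm_E_sub_one hn hw
  have h3 : ‖(1:ℂ)‖ ≤ ‖Complex.exp (I*w) * QQ n w‖ + ‖Complex.exp (I*w) * QQ n w - 1‖ := by
    simpa using norm_sub_le (Complex.exp (I*w) * QQ n w) (Complex.exp (I*w) * QQ n w - 1)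
  rw [norm_one] at h3
  have h4 : ‖Complex.exp (I*w) * QQ n w‖ ≤ Real.exp r * ‖QQ n w‖ := by
    rw [norm_mul]
    exact mul_le_mul_of_nonneg_right (norm_exp_I_le hw) (norm_nonneg _)
  rw [div_le_iff₀ (by positivity : (0:ℝ) < 2*Real.exp r)]
  nlinarith [Real.exp_pos r, norm_nonneg (QQ n w)]

lemma deriv_sphHankel (n : ℕ) (hn : 1 ≤ n) {w : ℂ} (hw : w ≠ 0) :
    deriv (sphHankel n) w =
      (KK n * (Complex.exp (I*w) * (I * AA n w)) * w^(n+1)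
        - KK n * (Complex.exp (I*w) * QQ n w) * ((n+1) * w^n)) / (w^(n+1))^2 := by
  have hev : sphHankel n =ᶠ[nhds w]
      (fun z => KK n * (Complex.exp (I*z) * QQ n z) / z^(n+1)) := by
    filter_upwards [compl_singleton_mem_nhds hw] with z hz
    rw [sphHankel_eq n hz]; ring
  rw [hev.deriv_eq]
  have hder : HasDerivAt (fun z => KK n * (Complex.exp (I*z) * QQ n z) / z^(n+1))
      ((KK n * (Complex.exp (I*w) * (I * AA n w)) * w^(n+1)
        - KK n * (Complex.exp (I*w) * QQ n w) * ((n+1) * w^(n+1-1))) / (w^(n+1))^2) w :=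
    by simpa using
      ((hasDerivAt_E n hn w).const_mul (KK n)).fun_div (hasDerivAt_pow (n+1) w) (pow_ne_zero _ hw)
  exact hder.deriv

lemma Feq (n : ℕ) (hn : 1 ≤ n) {κ : ℂ} {R : ℝ} (hκ : κ ≠ 0) (hR : R ≠ 0)
    (hQ : QQ n (κ*R) ≠ 0) :
    zfun n (κ*R) / (κ * sphHankel n (κ*R))
      = I*R*AA n (κ*R)/QQ n (κ*R) - n/κ := by
  have hRc : (R:ℂ) ≠ 0 := Complex.ofReal_ne_zero.mpr hR
  have hw : (κ*(R:ℂ)) ≠ 0 := mul_ne_zero hκ hRc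
  rw [zfun, deriv_sphHankel n hn hw, sphHankel_eq n hw]
  have hE : Complex.exp (I*(κ*R)) ≠ 0 := Complex.exp_ne_zero _
  have hK := KK_ne_zero n
  rw [pow_succ (κ*(R:ℂ)) n]
  generalize hP : (κ*(R:ℂ))^n = P
  have hPn : P ≠ 0 := hP ▸ pow_ne_zero _ hw
  field_simp
  have hu : (KK n * (KK n)⁻¹) * (κ^4 * κ⁻¹^4) * (((R:ℂ))^3 * ((R:ℂ))⁻¹^3)
      * (Complex.exp (I*(κ*(R:ℂ))) * (Complex.exp (I*(κ*(R:ℂ))))⁻¹)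
      * (QQ n (κ*(R:ℂ)) * (QQ n (κ*(R:ℂ)))⁻¹) * (P^3 * P⁻¹^3) = 1 := by
    rw [← mul_pow, ← mul_pow, ← mul_pow, mul_inv_cancel₀ hK, mul_inv_cancel₀ hκ,
      mul_inv_cancel₀ hRc, mul_inv_cancel₀ hE, mul_inv_cancel₀ hQ, mul_inv_cancel₀ hPn]
    norm_num
  ring


end DtnAux


open DtnAux in
theorem dtn_coeff_V_deriv_asymptotic (κ₀ : ℂ) (hκ₀ : κ₀ ≠ 0) (R : ℝ) (hR : 0 < R) :
    ∃ (N₀ : ℕ) (C : ℝ), 0 < C ∧ ∀ n : ℕ, N₀ ≤ n →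
      sphHankel n (κ₀ * R) ≠ 0 ∧
      DifferentiableAt ℂ
        (fun κ : ℂ => zfun n (κ * R) / (κ * sphHankel n (κ * R))) κ₀ ∧
      ‖deriv (fun κ : ℂ => zfun n (κ * R) / (κ * sphHankel n (κ * R))) κ₀
          - (n : ℂ) / κ₀ ^ 2‖ ≤ C / n := by
  obtain ⟨r, hrdef⟩ : ∃ r : ℝ, r = ‖κ₀‖ * R + 1 := ⟨_, rfl⟩
  have hr1 : 1 ≤ r := by
    rw [hrdef]
    nlinarith [mul_nonneg (norm_nonneg κ₀) hR.le]
  have hr0 : 0 < r := by linarith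
  obtain ⟨er, herdef⟩ : ∃ er : ℝ, er = Real.exp r := ⟨_, rfl⟩
  have her : 0 < er := herdef ▸ Real.exp_pos r
  refine ⟨max 1 (Nat.ceil (2 * r^2 * Real.exp (2*r))),
    R^2 * (((1+r)*er) * er + (r*er) * ((1+r)*er)) * (2*er)^2, by positivity, ?_⟩
  intro n hn
  have hn1 : 1 ≤ n := le_trans (le_max_left _ _) hn
  have hnR : (0:ℝ) < n := by exact_mod_cast hn1
  have hbig : r^2 * Real.exp (2*r) / n ≤ 1/2 := by
    rw [div_le_iff₀ hnR]
    have h1 : (Nat.ceil (2 * r^2 * Real.exp (2*r)) : ℝ) ≤ n := by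
      exact_mod_cast le_trans (le_max_right 1 _) hn
    have h2 := Nat.le_ceil (2 * r^2 * Real.exp (2*r))
    linarith [h2.trans h1]
  have hRc : (R:ℂ) ≠ 0 := Complex.ofReal_ne_zero.mpr hR.ne'
  -- norms of the base point
  have hwnorm : ‖κ₀ * (R:ℂ)‖ = ‖κ₀‖ * R := by
    rw [norm_mul, Complex.norm_real, Real.norm_eq_abs, abs_of_pos hR]
  have hwr : ‖κ₀ * (R:ℂ)‖ ≤ r := by rw [hwnorm]; linarith
  have hQlow := QQ_lower hn1 hwr hbig
  have hQpos : 0 < ‖QQ n (κ₀*(R:ℂ))‖ := lt_of_lt_of_le (by positivity) hQlow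
  have hQ0 : QQ n (κ₀*(R:ℂ)) ≠ 0 := by
    intro h; rw [h] at hQpos; simp at hQpos
  have hw0 : κ₀ * (R:ℂ) ≠ 0 := mul_ne_zero hκ₀ hRc
  have hsph : sphHankel n (κ₀ * (R:ℂ)) ≠ 0 := by
    rw [sphHankel_eq n hw0]
    exact div_ne_zero (mul_ne_zero (mul_ne_zero (KK_ne_zero n) (Complex.exp_ne_zero _)) hQ0)
      (pow_ne_zero _ hw0)
  -- the open set on which F = G
  have hFG : (fun κ : ℂ => zfun n (κ * R) / (κ * sphHankel n (κ * R)))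
      =ᶠ[nhds κ₀] (fun κ : ℂ => I*R*AA n (κ*R)/QQ n (κ*R) - n/κ) := by
    have hUopen : IsOpen {κ : ℂ | κ ≠ 0 ∧ ‖κ * (R:ℂ)‖ < r} := by
      apply IsOpen.inter isOpen_ne
      exact isOpen_lt ((continuous_id.mul continuous_const).norm) continuous_const
    have hmem : κ₀ ∈ {κ : ℂ | κ ≠ 0 ∧ ‖κ * (R:ℂ)‖ < r} := by
      refine ⟨hκ₀, ?_⟩
      rw [hwnorm]; simp [hrdef]
    filter_upwards [hUopen.mem_nhds hmem] with κ hκ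
    have hQκ : QQ n (κ*(R:ℂ)) ≠ 0 := by
      have := QQ_lower hn1 (le_of_lt hκ.2) hbig
      intro h; rw [h] at this; simp at this
      have hpos : 0 < (Real.exp r)⁻¹ * 2⁻¹ := by positivity
      linarith
    exact Feq n hn1 hκ.1 hR.ne' hQκ
  -- derivative of G
  set w := κ₀ * (R:ℂ) with hwdef
  have hmul : HasDerivAt (fun κ : ℂ => κ * (R:ℂ)) ((R:ℂ)) κ₀ := by
    simpa using (hasDerivAt_id κ₀).mul_const ((R:ℂ))
  have hA : HasDerivAt (fun κ : ℂ => AA n (κ*(R:ℂ))) (AA₁ n w * (R:ℂ)) κ₀ := by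
    exact (hasDerivAt_AA n w).comp κ₀ hmul
  have hQd : HasDerivAt (fun κ : ℂ => QQ n (κ*(R:ℂ))) (QQ₁ n w * (R:ℂ)) κ₀ := by
    exact (hasDerivAt_QQ n w).comp κ₀ hmul
  have hnum : HasDerivAt (fun κ : ℂ => I*(R:ℂ)*AA n (κ*(R:ℂ))) (I*(R:ℂ)*(AA₁ n w * (R:ℂ))) κ₀ :=
    hA.const_mul _
  have hdiv : HasDerivAt (fun κ : ℂ => I*(R:ℂ)*AA n (κ*(R:ℂ))/QQ n (κ*(R:ℂ)))
      ((I*(R:ℂ)*(AA₁ n w * (R:ℂ)) * QQ n w - I*(R:ℂ)*AA n w * (QQ₁ n w * (R:ℂ))) / (QQ n w)^2)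
      κ₀ := hnum.div hQd hQ0
  have hinv : HasDerivAt (fun κ : ℂ => (n:ℂ)/κ) ((n:ℂ) * -(κ₀^2)⁻¹) κ₀ := by
    have h := (hasDerivAt_inv hκ₀).const_mul (n:ℂ)
    simpa [div_eq_mul_inv] using h
  have hG : HasDerivAt (fun κ : ℂ => I*(R:ℂ)*AA n (κ*(R:ℂ))/QQ n (κ*(R:ℂ)) - (n:ℂ)/κ)
      ((I*(R:ℂ)*(AA₁ n w * (R:ℂ)) * QQ n w - I*(R:ℂ)*AA n w * (QQ₁ n w * (R:ℂ))) / (QQ n w)^2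
        - (n:ℂ) * -(κ₀^2)⁻¹) κ₀ := hdiv.sub hinv
  have hdiff : DifferentiableAt ℂ
      (fun κ : ℂ => zfun n (κ * R) / (κ * sphHankel n (κ * R))) κ₀ :=
    (hG.differentiableAt).congr_of_eventuallyEq hFG
  refine ⟨hsph, hdiff, ?_⟩
  have hderiv : deriv (fun κ : ℂ => zfun n (κ * R) / (κ * sphHankel n (κ * R))) κ₀
      = (I*(R:ℂ)*(AA₁ n w * (R:ℂ)) * QQ n w - I*(R:ℂ)*AA n w * (QQ₁ n w * (R:ℂ))) / (QQ n w)^2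
        - (n:ℂ) * -(κ₀^2)⁻¹ := by
    rw [hFG.deriv_eq]; exact hG.deriv
  rw [hderiv]
  have hcancel : (I*(R:ℂ)*(AA₁ n w * (R:ℂ)) * QQ n w - I*(R:ℂ)*AA n w * (QQ₁ n w * (R:ℂ)))
        / (QQ n w)^2 - (n:ℂ) * -(κ₀^2)⁻¹ - (n:ℂ)/κ₀^2
      = (I*(R:ℂ)*(AA₁ n w * (R:ℂ)) * QQ n w - I*(R:ℂ)*AA n w * (QQ₁ n w * (R:ℂ)))
        / (QQ n w)^2 := by
    rw [div_eq_mul_inv ((n:ℂ)) (κ₀^2)]; ring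
  rw [hcancel]
  -- final numeric bound
  rw [norm_div, norm_pow]
  have hnum_bound : ‖I*(R:ℂ)*(AA₁ n w * (R:ℂ)) * QQ n w - I*(R:ℂ)*AA n w * (QQ₁ n w * (R:ℂ))‖
      ≤ R^2 * (((1+r)*er) * er + (r*er) * ((1+r)*er)) / n := by
    have hAAb := norm_AA_le hn1 hwr
    have hAA1b := norm_AA₁_le hn1 hwr
    have hQb := norm_QQ_le n hwr
    have hQ1b := norm_QQ₁_le hn1 hwr
    calc ‖I*(R:ℂ)*(AA₁ n w * (R:ℂ)) * QQ n w - I*(R:ℂ)*AA n w * (QQ₁ n w * (R:ℂ))‖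
        ≤ ‖I*(R:ℂ)*(AA₁ n w * (R:ℂ)) * QQ n w‖ + ‖I*(R:ℂ)*AA n w * (QQ₁ n w * (R:ℂ))‖ :=
          norm_sub_le _ _
      _ = R * (‖AA₁ n w‖ * R) * ‖QQ n w‖ + R * ‖AA n w‖ * (‖QQ₁ n w‖ * R) := by
          simp only [norm_mul, Complex.norm_I, one_mul, Complex.norm_real, Real.norm_eq_abs, abs_of_pos hR]
      _ ≤ R * (((1+r)*er/n) * R) * er + R * (r*er/n) * (((1+r)*er) * R) := by
          rw [herdef]
          gcongr <;>
            first
              | positivity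
              | exact herdef ▸ norm_AA₁_le hn1 hwr
              | exact herdef ▸ norm_QQ_le n hwr
              | exact herdef ▸ norm_AA_le hn1 hwr
              | exact herdef ▸ norm_QQ₁_le hn1 hwr
      _ = R^2 * (((1+r)*er) * er + (r*er) * ((1+r)*er)) / n := by ring
  have hQsq : (1/(2*er))^2 ≤ ‖QQ n w‖^2 := by
    apply pow_le_pow_left₀ (by positivity) _ 2
    rw [herdef]; exact hQlow
  calc ‖I*(R:ℂ)*(AA₁ n w * (R:ℂ)) * QQ n w - I*(R:ℂ)*AA n w * (QQ₁ n w * (R:ℂ))‖ / ‖QQ n w‖^2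
      ≤ (R^2 * (((1+r)*er) * er + (r*er) * ((1+r)*er)) / n) / ((1/(2*er))^2) :=
        div_le_div₀ (by positivity) hnum_bound (by positivity) hQsq
    _ = R^2 * (((1+r)*er) * er + (r*er) * ((1+r)*er)) * (2*er)^2 / n := by
        field_simp
end
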